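/- arXiv:2511.02585 — 4 statements merged into one kernel-verified Lean document; each statement's English description precedes it below -/
import Mathlib

section
/- Let q be an odd integer with 0 < q < m. Then for every t ∈ V_m, ξ⁺_q(t)·(ξ⁻_1(t) − ξ⁻_1(q)) = ξ⁺_{q+1}(t) + q·ξ⁻_{q+1}(t) in R, where ξ⁻_1(q) ∈ R is the value of ξ⁻_1 at the vertex q. -/
noncomputable section

open Finset MvPolynomial

/-- The coefficient ring `R = ℚ[α,δ]`, realized as polynomials in two variables. -/
abbrev Rpoly : Type := MvPolynomial (Fin 2) ℚ

/-- The variable `α`. -/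
def va : Rpoly := X 0

/-- The variable `δ`. -/
def vd : Rpoly := X 1

/-- `P⁻(a,b) = ∏_{k=a}^{b} (−α + k·δ)`. -/
def Pneg (a b : ℤ) : Rpoly :=
  ∏ k ∈ Finset.Icc a b, (-va + MvPolynomial.C (k : ℚ) * vd)

/-- `P⁺(a,b) = ∏_{k=a}^{b} (α + k·δ)`. -/
def Ppos (a b : ℤ) : Rpoly :=
  ∏ k ∈ Finset.Icc a b, (va + MvPolynomial.C (k : ℚ) * vd)

/-- Binomial coefficient `C(n,q)` (all uses have `n ≥ 0`). -/
def B (n : ℤ) (q : ℕ) : ℚ := (n.toNat).choose q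

/-- The Knutson–Tao class `ξ⁺_q = ξ(m+q, m−q)`, as a function on vertices `t`
(the vertex `t` encodes the pair `(m+t, m−t)`). -/
def xiP (m : ℤ) (q : ℕ) (t : ℤ) : Rpoly :=
  if (q : ℤ) ≤ t ∧ t ≤ m then
    MvPolynomial.C (B (⌈((t : ℚ) - (q : ℚ) + 1) / 2⌉ + q - 1) q) *
      Pneg (⌈((t : ℚ) - (q : ℚ) + 1) / 2⌉ - 1) (⌈((t : ℚ) - (q : ℚ) + 1) / 2⌉ + q - 2)
  else if -m ≤ t ∧ t ≤ -((q : ℤ) + 1) then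
    MvPolynomial.C (B (⌈(-(t : ℚ) - (q : ℚ)) / 2⌉ + q - 1) q) *
      Ppos (⌈(-(t : ℚ) - (q : ℚ)) / 2⌉ + 1) (⌈(-(t : ℚ) - (q : ℚ)) / 2⌉ + q)
  else 0

/-- The Knutson–Tao class `ξ⁻_q = ξ(m−q, m+q)`. -/
def xiM (m : ℤ) (q : ℕ) (t : ℤ) : Rpoly :=
  if (q : ℤ) + 1 ≤ t ∧ t ≤ m then
    MvPolynomial.C (B (⌈((t : ℚ) - (q : ℚ)) / 2⌉ + q - 1) q) *
      Pneg (⌈((t : ℚ) - (q : ℚ)) / 2⌉) (⌈((t : ℚ) - (q : ℚ)) / 2⌉ + q - 1)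
  else if -m ≤ t ∧ t ≤ -(q : ℤ) then
    MvPolynomial.C (B (⌈(-(t : ℚ) - (q : ℚ) + 1) / 2⌉ + q - 1) q) *
      Ppos (⌈(-(t : ℚ) - (q : ℚ) + 1) / 2⌉) (⌈(-(t : ℚ) - (q : ℚ) + 1) / 2⌉ + q - 1)
  else 0

/-- The weight of the vertex `t`: `w(t) = ((1−2t)/2)·α + (t(t−1)/2)·δ`. -/
def w (t : ℤ) : Rpoly :=
  MvPolynomial.C ((1 - 2 * (t : ℚ)) / 2) * va +
    MvPolynomial.C (((t : ℚ) * ((t : ℚ) - 1)) / 2) * vd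
section Helpers

lemma ceil_half (x : ℚ) (c : ℤ) (h1 : 2*(c:ℚ) - 2 < x) (h2 : x ≤ 2*(c:ℚ)) :
    ⌈x/2⌉ = c := by
  rw [Int.ceil_eq_iff]
  constructor <;> [skip; skip] <;> push_cast <;> linarith

lemma Pneg_single (a : ℤ) : Pneg a a = -va + MvPolynomial.C (a:ℚ) * vd := by
  rw [Pneg, Finset.Icc_self, Finset.prod_singleton]

lemma Ppos_single (a : ℤ) : Ppos a a = va + MvPolynomial.C (a:ℚ) * vd := by
  rw [Ppos, Finset.Icc_self, Finset.prod_singleton]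

lemma Pneg_top (a b : ℤ) (h : a ≤ b) :
    Pneg a b = Pneg a (b-1) * (-va + MvPolynomial.C ((b:ℚ)) * vd) := by
  rw [Pneg, Pneg,
    show Finset.Icc a b = insert b (Finset.Icc a (b-1)) from by
      ext x; simp only [Finset.mem_insert, Finset.mem_Icc]; omega,
    Finset.prod_insert (by simp only [Finset.mem_Icc]; omega), mul_comm]

lemma Pneg_bot (a b : ℤ) (h : a ≤ b) :
    Pneg a b = (-va + MvPolynomial.C ((a:ℚ)) * vd) * Pneg (a+1) b := by
  rw [Pneg, Pneg,
    show Finset.Icc a b = insert a (Finset.Icc (a+1) b) from by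
      ext x; simp only [Finset.mem_insert, Finset.mem_Icc]; omega,
    Finset.prod_insert (by simp only [Finset.mem_Icc]; omega)]

lemma Ppos_top (a b : ℤ) (h : a ≤ b) :
    Ppos a b = Ppos a (b-1) * (va + MvPolynomial.C ((b:ℚ)) * vd) := by
  rw [Ppos, Ppos,
    show Finset.Icc a b = insert b (Finset.Icc a (b-1)) from by
      ext x; simp only [Finset.mem_insert, Finset.mem_Icc]; omega,
    Finset.prod_insert (by simp only [Finset.mem_Icc]; omega), mul_comm]

lemma Ppos_bot (a b : ℤ) (h : a ≤ b) :
    Ppos a b = (va + MvPolynomial.C ((a:ℚ)) * vd) * Ppos (a+1) b := by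
  rw [Ppos, Ppos,
    show Finset.Icc a b = insert a (Finset.Icc (a+1) b) from by
      ext x; simp only [Finset.mem_insert, Finset.mem_Icc]; omega,
    Finset.prod_insert (by simp only [Finset.mem_Icc]; omega)]

lemma xiP_eval_pos (m : ℤ) (q : ℕ) (t c : ℤ) (N : ℕ) (a b : ℤ)
    (h1 : (q : ℤ) ≤ t) (h2 : t ≤ m)
    (hc : ⌈((t : ℚ) - (q : ℚ) + 1) / 2⌉ = c)
    (hN : (c + q - 1).toNat = N) (ha : a = c - 1) (hb : b = c + q - 2) :
    xiP m q t = MvPolynomial.C (N.choose q : ℚ) * Pneg a b := by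
  subst ha hb hN
  rw [xiP, if_pos (And.intro h1 h2), hc, B]

lemma xiP_eval_neg (m : ℤ) (q : ℕ) (t c : ℤ) (N : ℕ) (a b : ℤ)
    (h1 : -m ≤ t) (h2 : t ≤ -((q : ℤ) + 1))
    (hc : ⌈(-(t : ℚ) - (q : ℚ)) / 2⌉ = c)
    (hN : (c + q - 1).toNat = N) (ha : a = c + 1) (hb : b = c + q) :
    xiP m q t = MvPolynomial.C (N.choose q : ℚ) * Ppos a b := by
  subst ha hb hN
  rw [xiP, if_neg (by omega), if_pos (And.intro h1 h2), hc, B]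

lemma xiM_eval_pos (m : ℤ) (q : ℕ) (t c : ℤ) (N : ℕ) (a b : ℤ)
    (h1 : (q : ℤ) + 1 ≤ t) (h2 : t ≤ m)
    (hc : ⌈((t : ℚ) - (q : ℚ)) / 2⌉ = c)
    (hN : (c + q - 1).toNat = N) (ha : a = c) (hb : b = c + q - 1) :
    xiM m q t = MvPolynomial.C (N.choose q : ℚ) * Pneg a b := by
  subst ha hb hN
  rw [xiM, if_pos (And.intro h1 h2), hc, B]

lemma xiM_eval_neg (m : ℤ) (q : ℕ) (t c : ℤ) (N : ℕ) (a b : ℤ)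
    (h1 : -m ≤ t) (h2 : t ≤ -(q : ℤ))
    (hc : ⌈(-(t : ℚ) - (q : ℚ) + 1) / 2⌉ = c)
    (hN : (c + q - 1).toNat = N) (ha : a = c) (hb : b = c + q - 1) :
    xiM m q t = MvPolynomial.C (N.choose q : ℚ) * Ppos a b := by
  subst ha hb hN
  rw [xiM, if_neg (by omega), if_pos (And.intro h1 h2), hc, B]

lemma xiP_zero (m : ℤ) (q : ℕ) (t : ℤ)
    (h1 : ¬((q : ℤ) ≤ t ∧ t ≤ m)) (h2 : ¬(-m ≤ t ∧ t ≤ -((q : ℤ) + 1))) :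
    xiP m q t = 0 := by
  rw [xiP, if_neg h1, if_neg h2]

lemma xiM_zero (m : ℤ) (q : ℕ) (t : ℤ)
    (h1 : ¬((q : ℤ) + 1 ≤ t ∧ t ≤ m)) (h2 : ¬(-m ≤ t ∧ t ≤ -(q : ℤ))) :
    xiM m q t = 0 := by
  rw [xiM, if_neg h1, if_neg h2]

lemma keyB' (n q : ℕ) : (n+q).choose (q+1) * (q+1) = n * ((n+q).choose q) := by
  rw [Nat.choose_succ_right_eq, Nat.add_sub_cancel, Nat.mul_comm]

lemma keyA' (n q : ℕ) :
    (n+q).choose q * (n+1) = (n+q+1).choose (q+1) + q * ((n+q).choose (q+1)) := by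
  have h1 : ((n+q+1).choose (q+1) : ℚ) = (n+q).choose q + (n+q).choose (q+1) := by
    exact_mod_cast Nat.choose_succ_succ (n+q) q
  have h2 : ((n+q).choose (q+1) : ℚ) * (q+1) = n * ((n+q).choose q) := by
    exact_mod_cast keyB' n q
  have h : ((n+q).choose q : ℚ) * (n+1)
      = (n+q+1).choose (q+1) + q * ((n+q).choose (q+1)) := by
    linear_combination (-1 : ℚ) * h1 - h2
  exact_mod_cast h

lemma keyC' (n q : ℕ) :
    (n+q).choose q * (q+n) = (n+q).choose (q+1) + q * ((n+q+1).choose (q+1)) := by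
  have h1 : ((n+q+1).choose (q+1) : ℚ) = (n+q).choose q + (n+q).choose (q+1) := by
    exact_mod_cast Nat.choose_succ_succ (n+q) q
  have h2 : ((n+q).choose (q+1) : ℚ) * (q+1) = n * ((n+q).choose q) := by
    exact_mod_cast keyB' n q
  have h : ((n+q).choose q : ℚ) * (q+n)
      = (n+q).choose (q+1) + q * ((n+q+1).choose (q+1)) := by
    linear_combination (-(q:ℚ)) * h1 - h2
  exact_mod_cast h

lemma keyD' (p q : ℕ) :
    (p+q).choose q * (q+p+1) = (p+q+1).choose (q+1) * (q+1) := by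
  rw [Nat.mul_comm, show q+p+1 = (p+q)+1 from by omega]
  exact Nat.add_one_mul_choose_eq (p+q) q

end Helpers
lemma regIa (m e n : ℕ) (t : ℤ)
    (ht : t = ((2*e+1:ℕ):ℤ) + 2*(n:ℤ) + 1) (h2 : t ≤ (m:ℤ))
    (hM1q : xiM (m:ℤ) 1 ((2*e+1:ℕ):ℤ) = MvPolynomial.C ((e:ℚ)) * Pneg (e:ℤ) (e:ℤ)) :
    xiP (m:ℤ) (2*e+1) t * (xiM (m:ℤ) 1 t - xiM (m:ℤ) 1 ((2*e+1:ℕ):ℤ)) =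
      xiP (m:ℤ) (2*e+1+1) t + ((2*e+1 : ℕ) : Rpoly) * xiM (m:ℤ) (2*e+1+1) t := by
  have hP : xiP (m:ℤ) (2*e+1) t
      = MvPolynomial.C (((n+(2*e+1)).choose (2*e+1) : ℚ)) * Pneg (n:ℤ) ((n:ℤ)+2*(e:ℤ)) :=
    xiP_eval_pos _ _ _ ((n:ℤ)+1) _ _ _ (by omega) h2
      (by subst ht; apply ceil_half <;> push_cast <;> linarith)
      (by omega) (by ring) (by push_cast; ring)
  have hM1 : xiM (m:ℤ) 1 t
      = MvPolynomial.C (((e+n+1 : ℕ) : ℚ)) * Pneg ((e:ℤ)+(n:ℤ)+1) ((e:ℤ)+(n:ℤ)+1) := by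
    have := xiM_eval_pos (m:ℤ) 1 t ((e:ℤ)+(n:ℤ)+1) (e+n+1) ((e:ℤ)+(n:ℤ)+1) ((e:ℤ)+(n:ℤ)+1)
      (by omega) h2
      (by subst ht; apply ceil_half <;> push_cast <;> linarith)
      (by omega) rfl (by push_cast; ring)
    simpa [Nat.choose_one_right] using this
  have hP' : xiP (m:ℤ) (2*e+1+1) t
      = MvPolynomial.C (((n+(2*e+1)+1).choose (2*e+1+1) : ℚ)) * Pneg (n:ℤ) ((n:ℤ)+2*(e:ℤ)+1) :=
    xiP_eval_pos _ _ _ ((n:ℤ)+1) _ _ _ (by omega) h2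
      (by subst ht; apply ceil_half <;> push_cast <;> linarith)
      (by omega) (by ring) (by push_cast; ring)
  have hM' : xiM (m:ℤ) (2*e+1+1) t
      = MvPolynomial.C (((n+(2*e+1)).choose (2*e+1+1) : ℚ)) * Pneg (n:ℤ) ((n:ℤ)+2*(e:ℤ)+1) := by
    rcases Nat.eq_zero_or_pos n with hn | hn
    · subst hn
      rw [xiM_zero _ _ _ (by omega) (by omega),
        show ((0+(2*e+1)).choose (2*e+1+1)) = 0 from Nat.choose_eq_zero_of_lt (by omega)]
      simp
    · exact xiM_eval_pos _ _ _ ((n:ℤ)) _ _ _ (by omega) h2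
        (by subst ht; apply ceil_half <;> push_cast <;> linarith)
        (by omega) rfl (by push_cast; ring)
  have hsplit : Pneg (n:ℤ) ((n:ℤ)+2*(e:ℤ)+1)
      = Pneg (n:ℤ) ((n:ℤ)+2*(e:ℤ)) * (-va + MvPolynomial.C (((n:ℤ)+2*(e:ℤ)+1 : ℤ):ℚ) * vd) := by
    have h := Pneg_top (n:ℤ) ((n:ℤ)+2*(e:ℤ)+1) (by omega)
    rwa [show ((n:ℤ)+2*(e:ℤ)+1-1 : ℤ) = (n:ℤ)+2*(e:ℤ) from by ring] at h
  have hkey : (((n+(2*e+1)).choose (2*e+1) : ℕ) : Rpoly) * ((n:Rpoly)+1)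
      = ((n+(2*e+1)+1).choose (2*e+1+1) : ℕ) + ((2*e+1 : ℕ) : Rpoly) * (((n+(2*e+1)).choose (2*e+1+1) : ℕ) : Rpoly) := by
    exact_mod_cast keyA' n (2*e+1)
  rw [hP, hM1, hM1q, hP', hM', hsplit]
  simp only [Pneg_single, map_natCast, map_intCast]
  push_cast
  push_cast at hkey
  linear_combination (Pneg (n:ℤ) ((n:ℤ)+2*(e:ℤ)) * (-va + ((n:Rpoly)+2*(e:Rpoly)+1)*vd)) * hkey
lemma regIb (m e n : ℕ) (t : ℤ) (hn : 1 ≤ n)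
    (ht : t = ((2*e+1:ℕ):ℤ) + 2*(n:ℤ)) (h2 : t ≤ (m:ℤ))
    (hM1q : xiM (m:ℤ) 1 ((2*e+1:ℕ):ℤ) = MvPolynomial.C ((e:ℚ)) * Pneg (e:ℤ) (e:ℤ)) :
    xiP (m:ℤ) (2*e+1) t * (xiM (m:ℤ) 1 t - xiM (m:ℤ) 1 ((2*e+1:ℕ):ℤ)) =
      xiP (m:ℤ) (2*e+1+1) t + ((2*e+1 : ℕ) : Rpoly) * xiM (m:ℤ) (2*e+1+1) t := by
  have hP : xiP (m:ℤ) (2*e+1) t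
      = MvPolynomial.C (((n+(2*e+1)).choose (2*e+1) : ℚ)) * Pneg (n:ℤ) ((n:ℤ)+2*(e:ℤ)) :=
    xiP_eval_pos _ _ _ ((n:ℤ)+1) _ _ _ (by omega) h2
      (by subst ht; apply ceil_half <;> push_cast <;> linarith)
      (by omega) (by ring) (by push_cast; ring)
  have hM1 : xiM (m:ℤ) 1 t
      = MvPolynomial.C (((e+n : ℕ) : ℚ)) * Pneg ((e:ℤ)+(n:ℤ)) ((e:ℤ)+(n:ℤ)) := by
    have := xiM_eval_pos (m:ℤ) 1 t ((e:ℤ)+(n:ℤ)) (e+n) ((e:ℤ)+(n:ℤ)) ((e:ℤ)+(n:ℤ))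
      (by omega) h2
      (by subst ht; apply ceil_half <;> push_cast <;> linarith)
      (by omega) rfl (by push_cast; ring)
    simpa [Nat.choose_one_right] using this
  have hP' : xiP (m:ℤ) (2*e+1+1) t
      = MvPolynomial.C (((n+(2*e+1)).choose (2*e+1+1) : ℚ)) * Pneg ((n:ℤ)-1) ((n:ℤ)+2*(e:ℤ)) :=
    xiP_eval_pos _ _ _ ((n:ℤ)) _ _ _ (by omega) h2
      (by subst ht; apply ceil_half <;> push_cast <;> linarith)
      (by omega) (by ring) (by push_cast; ring)
  have hM' : xiM (m:ℤ) (2*e+1+1) t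
      = MvPolynomial.C (((n+(2*e+1)).choose (2*e+1+1) : ℚ)) * Pneg (n:ℤ) ((n:ℤ)+2*(e:ℤ)+1) :=
    xiM_eval_pos _ _ _ ((n:ℤ)) _ _ _ (by omega) h2
      (by subst ht; apply ceil_half <;> push_cast <;> linarith)
      (by omega) rfl (by push_cast; ring)
  have hsplit1 : Pneg ((n:ℤ)-1) ((n:ℤ)+2*(e:ℤ))
      = (-va + MvPolynomial.C (((n:ℤ)-1 : ℤ):ℚ) * vd) * Pneg (n:ℤ) ((n:ℤ)+2*(e:ℤ)) := by
    have h := Pneg_bot ((n:ℤ)-1) ((n:ℤ)+2*(e:ℤ)) (by omega)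
    rwa [show ((n:ℤ)-1+1 : ℤ) = (n:ℤ) from by ring] at h
  have hsplit2 : Pneg (n:ℤ) ((n:ℤ)+2*(e:ℤ)+1)
      = Pneg (n:ℤ) ((n:ℤ)+2*(e:ℤ)) * (-va + MvPolynomial.C (((n:ℤ)+2*(e:ℤ)+1 : ℤ):ℚ) * vd) := by
    have h := Pneg_top (n:ℤ) ((n:ℤ)+2*(e:ℤ)+1) (by omega)
    rwa [show ((n:ℤ)+2*(e:ℤ)+1-1 : ℤ) = (n:ℤ)+2*(e:ℤ) from by ring] at h
  have hkey : (((n+(2*e+1)).choose (2*e+1+1) : ℕ) : Rpoly) * ((2*e+1 : ℕ) + 1 : Rpoly)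
      = (n : Rpoly) * (((n+(2*e+1)).choose (2*e+1) : ℕ) : Rpoly) := by
    exact_mod_cast keyB' n (2*e+1)
  rw [hP, hM1, hM1q, hP', hM', hsplit1, hsplit2]
  simp only [Pneg_single, map_natCast, map_intCast]
  push_cast
  push_cast at hkey
  linear_combination (-(Pneg (n:ℤ) ((n:ℤ)+2*(e:ℤ)) * (-va + ((n:Rpoly)+2*(e:Rpoly))*vd))) * hkey
lemma regIIIa (m e n : ℕ) (t : ℤ)
    (ht : t = -((2*e+1:ℕ):ℤ) - 2*(n:ℤ) - 1) (h1 : -(m:ℤ) ≤ t) (hqm : 2*e+1 < m)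
    (hM1q : xiM (m:ℤ) 1 ((2*e+1:ℕ):ℤ) = MvPolynomial.C ((e:ℚ)) * Pneg (e:ℤ) (e:ℤ)) :
    xiP (m:ℤ) (2*e+1) t * (xiM (m:ℤ) 1 t - xiM (m:ℤ) 1 ((2*e+1:ℕ):ℤ)) =
      xiP (m:ℤ) (2*e+1+1) t + ((2*e+1 : ℕ) : Rpoly) * xiM (m:ℤ) (2*e+1+1) t := by
  have hP : xiP (m:ℤ) (2*e+1) t
      = MvPolynomial.C (((n+(2*e+1)).choose (2*e+1) : ℚ)) * Ppos ((n:ℤ)+2) ((n:ℤ)+2*(e:ℤ)+2) :=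
    xiP_eval_neg _ _ _ ((n:ℤ)+1) _ _ _ h1 (by omega)
      (by subst ht; apply ceil_half <;> push_cast <;> linarith)
      (by omega) (by ring) (by push_cast; ring)
  have hM1 : xiM (m:ℤ) 1 t
      = MvPolynomial.C (((e+n+1 : ℕ) : ℚ)) * Ppos ((e:ℤ)+(n:ℤ)+1) ((e:ℤ)+(n:ℤ)+1) := by
    have := xiM_eval_neg (m:ℤ) 1 t ((e:ℤ)+(n:ℤ)+1) (e+n+1) ((e:ℤ)+(n:ℤ)+1) ((e:ℤ)+(n:ℤ)+1)
      h1 (by omega)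
      (by subst ht; apply ceil_half <;> push_cast <;> linarith)
      (by omega) rfl (by push_cast; ring)
    simpa [Nat.choose_one_right] using this
  have hP' : xiP (m:ℤ) (2*e+1+1) t
      = MvPolynomial.C (((n+(2*e+1)).choose (2*e+1+1) : ℚ)) * Ppos ((n:ℤ)+1) ((n:ℤ)+2*(e:ℤ)+2) := by
    rcases Nat.eq_zero_or_pos n with hn | hn
    · subst hn
      rw [xiP_zero _ _ _ (by omega) (by omega),
        show ((0+(2*e+1)).choose (2*e+1+1)) = 0 from Nat.choose_eq_zero_of_lt (by omega)]
      simp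
    · exact xiP_eval_neg _ _ _ ((n:ℤ)) _ _ _ h1 (by omega)
        (by subst ht; apply ceil_half <;> push_cast <;> linarith)
        (by omega) (by ring) (by push_cast; ring)
  have hM' : xiM (m:ℤ) (2*e+1+1) t
      = MvPolynomial.C (((n+(2*e+1)+1).choose (2*e+1+1) : ℚ)) * Ppos ((n:ℤ)+1) ((n:ℤ)+2*(e:ℤ)+2) :=
    xiM_eval_neg _ _ _ ((n:ℤ)+1) _ _ _ h1 (by omega)
      (by subst ht; apply ceil_half <;> push_cast <;> linarith)
      (by omega) (by ring) (by push_cast; ring)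
  have hsplit : Ppos ((n:ℤ)+1) ((n:ℤ)+2*(e:ℤ)+2)
      = (va + MvPolynomial.C (((n:ℤ)+1 : ℤ):ℚ) * vd) * Ppos ((n:ℤ)+2) ((n:ℤ)+2*(e:ℤ)+2) := by
    have h := Ppos_bot ((n:ℤ)+1) ((n:ℤ)+2*(e:ℤ)+2) (by omega)
    rwa [show ((n:ℤ)+1+1 : ℤ) = (n:ℤ)+2 from by ring] at h
  have hkey : (((n+(2*e+1)).choose (2*e+1) : ℕ) : Rpoly) * (((2*e+1:ℕ) : Rpoly)+(n:Rpoly))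
      = (((n+(2*e+1)).choose (2*e+1+1) : ℕ) : Rpoly)
        + ((2*e+1 : ℕ) : Rpoly) * (((n+(2*e+1)+1).choose (2*e+1+1) : ℕ) : Rpoly) := by
    exact_mod_cast keyC' n (2*e+1)
  rw [hP, hM1, hM1q, hP', hM', hsplit]
  simp only [Pneg_single, Ppos_single, map_natCast, map_intCast]
  push_cast
  push_cast at hkey
  linear_combination (Ppos ((n:ℤ)+2) ((n:ℤ)+2*(e:ℤ)+2) * (va + ((n:Rpoly)+1)*vd)) * hkey
lemma regIIIb (m e p : ℕ) (t : ℤ)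
    (ht : t = -((2*e+1:ℕ):ℤ) - 2*(p:ℤ) - 2) (h1 : -(m:ℤ) ≤ t)
    (hM1q : xiM (m:ℤ) 1 ((2*e+1:ℕ):ℤ) = MvPolynomial.C ((e:ℚ)) * Pneg (e:ℤ) (e:ℤ)) :
    xiP (m:ℤ) (2*e+1) t * (xiM (m:ℤ) 1 t - xiM (m:ℤ) 1 ((2*e+1:ℕ):ℤ)) =
      xiP (m:ℤ) (2*e+1+1) t + ((2*e+1 : ℕ) : Rpoly) * xiM (m:ℤ) (2*e+1+1) t := by
  have hP : xiP (m:ℤ) (2*e+1) t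
      = MvPolynomial.C (((p+(2*e+1)).choose (2*e+1) : ℚ)) * Ppos ((p:ℤ)+2) ((p:ℤ)+2*(e:ℤ)+2) :=
    xiP_eval_neg _ _ _ ((p:ℤ)+1) _ _ _ h1 (by omega)
      (by subst ht; apply ceil_half <;> push_cast <;> linarith)
      (by omega) (by ring) (by push_cast; ring)
  have hM1 : xiM (m:ℤ) 1 t
      = MvPolynomial.C (((e+p+2 : ℕ) : ℚ)) * Ppos ((e:ℤ)+(p:ℤ)+2) ((e:ℤ)+(p:ℤ)+2) := by
    have := xiM_eval_neg (m:ℤ) 1 t ((e:ℤ)+(p:ℤ)+2) (e+p+2) ((e:ℤ)+(p:ℤ)+2) ((e:ℤ)+(p:ℤ)+2)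
      h1 (by omega)
      (by subst ht; apply ceil_half <;> push_cast <;> linarith)
      (by omega) rfl (by push_cast; ring)
    simpa [Nat.choose_one_right] using this
  have hP' : xiP (m:ℤ) (2*e+1+1) t
      = MvPolynomial.C (((p+(2*e+1)+1).choose (2*e+1+1) : ℚ)) * Ppos ((p:ℤ)+2) ((p:ℤ)+2*(e:ℤ)+3) :=
    xiP_eval_neg _ _ _ ((p:ℤ)+1) _ _ _ h1 (by omega)
      (by subst ht; apply ceil_half <;> push_cast <;> linarith)
      (by omega) (by ring) (by push_cast; ring)
  have hM' : xiM (m:ℤ) (2*e+1+1) t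
      = MvPolynomial.C (((p+(2*e+1)+1).choose (2*e+1+1) : ℚ)) * Ppos ((p:ℤ)+1) ((p:ℤ)+2*(e:ℤ)+2) :=
    xiM_eval_neg _ _ _ ((p:ℤ)+1) _ _ _ h1 (by omega)
      (by subst ht; apply ceil_half <;> push_cast <;> linarith)
      (by omega) (by ring) (by push_cast; ring)
  have hsplit1 : Ppos ((p:ℤ)+2) ((p:ℤ)+2*(e:ℤ)+3)
      = Ppos ((p:ℤ)+2) ((p:ℤ)+2*(e:ℤ)+2) * (va + MvPolynomial.C (((p:ℤ)+2*(e:ℤ)+3 : ℤ):ℚ) * vd) := by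
    have h := Ppos_top ((p:ℤ)+2) ((p:ℤ)+2*(e:ℤ)+3) (by omega)
    rwa [show ((p:ℤ)+2*(e:ℤ)+3-1 : ℤ) = (p:ℤ)+2*(e:ℤ)+2 from by ring] at h
  have hsplit2 : Ppos ((p:ℤ)+1) ((p:ℤ)+2*(e:ℤ)+2)
      = (va + MvPolynomial.C (((p:ℤ)+1 : ℤ):ℚ) * vd) * Ppos ((p:ℤ)+2) ((p:ℤ)+2*(e:ℤ)+2) := by
    have h := Ppos_bot ((p:ℤ)+1) ((p:ℤ)+2*(e:ℤ)+2) (by omega)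
    rwa [show ((p:ℤ)+1+1 : ℤ) = (p:ℤ)+2 from by ring] at h
  have hkey : (((p+(2*e+1)).choose (2*e+1) : ℕ) : Rpoly) * (((2*e+1:ℕ) : Rpoly)+(p:Rpoly)+1)
      = (((p+(2*e+1)+1).choose (2*e+1+1) : ℕ) : Rpoly) * (((2*e+1:ℕ) : Rpoly)+1) := by
    exact_mod_cast keyD' p (2*e+1)
  rw [hP, hM1, hM1q, hP', hM', hsplit1, hsplit2]
  simp only [Pneg_single, Ppos_single, map_natCast, map_intCast]
  push_cast
  push_cast at hkey
  linear_combination (Ppos ((p:ℤ)+2) ((p:ℤ)+2*(e:ℤ)+2) * (va + ((p:Rpoly)+2)*vd)) * hkey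
/-- for odd `0 < q < m`,
`ξ⁺_q · (ξ⁻_1 − ξ⁻_1(q)) = ξ⁺_{q+1} + q·ξ⁻_{q+1}` pointwise on `V_m`. -/
theorem statement10 (m : ℕ) (hm : 1 ≤ m) (q : ℕ) (hodd : Odd q)
    (hq0 : 0 < q) (hqm : q < m)
    (t : ℤ) (ht1 : -(m : ℤ) ≤ t) (ht2 : t ≤ (m : ℤ)) :
    xiP m q t * (xiM m 1 t - xiM m 1 (q : ℤ)) =
      xiP m (q + 1) t + (q : Rpoly) * xiM m (q + 1) t := by
  obtain ⟨e, rfl⟩ := hodd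
  have hM1q : xiM (m:ℤ) 1 ((2*e+1:ℕ):ℤ) = MvPolynomial.C ((e:ℚ)) * Pneg (e:ℤ) (e:ℤ) := by
    rcases Nat.eq_zero_or_pos e with he | he
    · subst he
      rw [xiM_zero _ _ _ (by omega) (by omega)]
      simp
    · have := xiM_eval_pos (m:ℤ) 1 ((2*e+1:ℕ):ℤ) (e:ℤ) e (e:ℤ) (e:ℤ)
        (by omega) (by omega)
        (by apply ceil_half <;> push_cast <;> linarith)
        (by omega) rfl (by push_cast; ring)
      simpa [Nat.choose_one_right] using this
  by_cases hI : ((2*e+1 : ℕ) : ℤ) ≤ t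
  · rcases Int.even_or_odd (t - ((2*e+1:ℕ):ℤ)) with ⟨k, hk⟩ | ⟨k, hk⟩
    · lift k to ℕ using (by omega) with n
      rcases Nat.eq_zero_or_pos n with hn | hn
      · subst hn
        have ht : t = ((2*e+1:ℕ):ℤ) := by omega
        subst ht
        rw [sub_self, mul_zero,
          xiP_zero (m:ℤ) (2*e+1+1) ((2*e+1:ℕ):ℤ) (by omega) (by omega),
          xiM_zero (m:ℤ) (2*e+1+1) ((2*e+1:ℕ):ℤ) (by omega) (by omega)]
        ring
      · exact regIb m e n t hn (by omega) ht2 hM1q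
    · lift k to ℕ using (by omega) with n
      exact regIa m e n t (by omega) ht2 hM1q
  · by_cases hIII : t ≤ -(((2*e+1:ℕ):ℤ)+1)
    · rcases Int.even_or_odd (-t - ((2*e+1:ℕ):ℤ)) with ⟨k, hk⟩ | ⟨k, hk⟩
      · lift k to ℕ using (by omega) with k
        rcases k with _ | p
        · omega
        · exact regIIIb m e p t (by push_cast; push_cast at hk; omega) ht1 hM1q
      · lift k to ℕ using (by omega) with n
        exact regIIIa m e n t (by omega) ht1 hqm hM1q
    · rw [xiP_zero (m:ℤ) (2*e+1) t (by omega) (by omega),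
        xiP_zero (m:ℤ) (2*e+1+1) t (by omega) (by omega),
        xiM_zero (m:ℤ) (2*e+1+1) t (by omega) (by omega)]
      ring
end
end

section
/- For every t ∈ V_m, 2·ξ⁺_1(t)·ξ⁻_1(t) = ξ⁺_1(t)·(ξ⁺_1(t) − ξ⁺_1(1)) + ξ⁻_1(t)·(ξ⁻_1(t) − ξ⁻_1(−1)) in R, where ξ⁺_1(1) and ξ⁻_1(−1) are the values of ξ⁺_1 at vertex 1 and of ξ⁻_1 at vertex −1. -/
noncomputable section

open Finset MvPolynomial

lemma B_one (n : ℤ) (h : 0 ≤ n) : B n 1 = (n : ℚ) := by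
  simp only [B, Nat.choose_one_right]
  exact_mod_cast congrArg (Int.cast : ℤ → ℚ) (Int.toNat_of_nonneg h)

lemma ceil_half_odd (s : ℤ) : ⌈((2*s+1 : ℤ):ℚ)/2⌉ = s + 1 := by
  have h1 : ((2*s+1 : ℤ):ℚ)/2 = 1/2 + (s:ℚ) := by push_cast; ring
  rw [h1, show ((s:ℚ)) = ((s:ℤ):ℚ) from rfl, Int.ceil_add_intCast]
  have hh : ⌈(1/2 : ℚ)⌉ = 1 := by norm_num [Int.ceil_eq_iff]
  omega

lemma xiP_case1 (m t c : ℤ) (h1 : 1 ≤ t) (h2 : t ≤ m)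
    (hc : ⌈((t:ℚ))/2⌉ = c) (hc0 : 0 ≤ c) :
    xiP m 1 t = MvPolynomial.C (c:ℚ) * (-va + MvPolynomial.C ((c:ℚ)-1) * vd) := by
  rw [xiP, if_pos ⟨by exact_mod_cast h1, h2⟩]
  simp only [Nat.cast_one]
  rw [show ((t:ℚ) - 1 + 1)/2 = (t:ℚ)/2 by ring, hc,
    show c + 1 - 1 = c by ring, show c + 1 - 2 = c - 1 by ring,
    B_one c hc0, Pneg_single]
  push_cast
  ring

lemma xiP_case2 (m t c : ℤ) (h1 : -m ≤ t) (h2 : t ≤ -2)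
    (hc : ⌈(-(t:ℚ)-1)/2⌉ = c) (hc0 : 0 ≤ c) :
    xiP m 1 t = MvPolynomial.C (c:ℚ) * (va + MvPolynomial.C ((c:ℚ)+1) * vd) := by
  rw [xiP, if_neg (by omega), if_pos ⟨h1, by omega⟩]
  simp only [Nat.cast_one]
  rw [hc, show c + 1 - 1 = c by ring, B_one c hc0, Ppos_single]
  push_cast
  ring

lemma xiM_case1 (m t c : ℤ) (h1 : 2 ≤ t) (h2 : t ≤ m)
    (hc : ⌈((t:ℚ)-1)/2⌉ = c) (hc0 : 0 ≤ c) :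
    xiM m 1 t = MvPolynomial.C (c:ℚ) * (-va + MvPolynomial.C (c:ℚ) * vd) := by
  rw [xiM, if_pos ⟨by omega, h2⟩]
  simp only [Nat.cast_one]
  rw [hc, show c + 1 - 1 = c by ring, B_one c hc0, Pneg_single]

lemma xiM_case2 (m t c : ℤ) (h1 : -m ≤ t) (h2 : t ≤ -1)
    (hc : ⌈(-(t:ℚ))/2⌉ = c) (hc0 : 0 ≤ c) :
    xiM m 1 t = MvPolynomial.C (c:ℚ) * (va + MvPolynomial.C (c:ℚ) * vd) := by
  rw [xiM, if_neg (by omega), if_pos ⟨h1, by omega⟩]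
  simp only [Nat.cast_one]
  rw [show (-(t:ℚ) - 1 + 1)/2 = (-(t:ℚ))/2 by ring, hc,
    show c + 1 - 1 = c by ring, B_one c hc0, Ppos_single]

/-- `2·ξ⁺_1·ξ⁻_1 = ξ⁺_1·(ξ⁺_1 − ξ⁺_1(1)) + ξ⁻_1·(ξ⁻_1 − ξ⁻_1(−1))`
pointwise on `V_m`. -/
theorem statement14 (m : ℕ) (hm : 1 ≤ m) (t : ℤ)
    (ht1 : -(m : ℤ) ≤ t) (ht2 : t ≤ (m : ℤ)) :
    2 * (xiP m 1 t * xiM m 1 t) =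
      xiP m 1 t * (xiP m 1 t - xiP m 1 1) + xiM m 1 t * (xiM m 1 t - xiM m 1 (-1)) := by
  have hm' : (1:ℤ) ≤ (m:ℤ) := by exact_mod_cast hm
  have hP1 : xiP m 1 1 = MvPolynomial.C ((1:ℤ):ℚ) *
      (-va + MvPolynomial.C (((1:ℤ):ℚ)-1) * vd) :=
    xiP_case1 m 1 1 le_rfl hm' (by norm_num [Int.ceil_eq_iff]) (by norm_num)
  have hM1 : xiM m 1 (-1) = MvPolynomial.C ((1:ℤ):ℚ) *
      (va + MvPolynomial.C ((1:ℤ):ℚ) * vd) :=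
    xiM_case2 m (-1) 1 (by omega) le_rfl (by norm_num [Int.ceil_eq_iff]) (by norm_num)
  rcases Int.even_or_odd t with ⟨s, rfl⟩ | ⟨s, rfl⟩
  · -- t = s + s
    rcases lt_trichotomy s 0 with hs | rfl | hs
    · -- s ≤ -1
      have hP := xiP_case2 m (s+s) (-s-1+1) ht1 (by omega)
        (by rw [show (-((s+s : ℤ):ℚ)-1)/2 = ((2*(-s-1)+1 : ℤ):ℚ)/2 by push_cast; ring,
              ceil_half_odd]) (by omega)
      have hM := xiM_case2 m (s+s) (-s) ht1 (by omega)
        (by rw [show (-((s+s : ℤ):ℚ))/2 = ((-s : ℤ):ℚ) by push_cast; ring,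
              Int.ceil_intCast]) (by omega)
      rw [hP, hM, hP1, hM1]
      simp only [Int.cast_neg, Int.cast_add, Int.cast_sub, Int.cast_one,
        map_neg, map_add, map_sub, map_one]
      ring
    · -- s = 0
      have hP0 : xiP m 1 (0+0) = 0 := by
        rw [xiP, if_neg (by omega), if_neg (by omega)]
      have hM0 : xiM m 1 (0+0) = 0 := by
        rw [xiM, if_neg (by omega), if_neg (by omega)]
      rw [hP0, hM0]; ring
    · -- s ≥ 1
      have hP := xiP_case1 m (s+s) s (by omega) ht2
        (by rw [show (((s+s : ℤ)):ℚ)/2 = ((s : ℤ):ℚ) by push_cast; ring,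
              Int.ceil_intCast]) (by omega)
      have hM := xiM_case1 m (s+s) (s-1+1) (by omega) ht2
        (by rw [show ((((s+s : ℤ)):ℚ)-1)/2 = ((2*(s-1)+1 : ℤ):ℚ)/2 by push_cast; ring,
              ceil_half_odd]) (by omega)
      rw [hP, hM, hP1, hM1]
      simp only [Int.cast_neg, Int.cast_add, Int.cast_sub, Int.cast_one,
        map_neg, map_add, map_sub, map_one]
      ring
  · -- t = 2s + 1
    obtain hs | rfl | rfl | hs : 1 ≤ s ∨ s = 0 ∨ s = -1 ∨ s ≤ -2 := by omega
    · -- s ≥ 1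
      have hP := xiP_case1 m (2*s+1) (s+1) (by omega) ht2
        (by rw [ceil_half_odd]) (by omega)
      have hM := xiM_case1 m (2*s+1) s (by omega) ht2
        (by rw [show ((((2*s+1 : ℤ)):ℚ)-1)/2 = ((s : ℤ):ℚ) by push_cast; ring,
              Int.ceil_intCast]) (by omega)
      rw [hP, hM, hP1, hM1]
      simp only [Int.cast_neg, Int.cast_add, Int.cast_sub, Int.cast_one,
        map_neg, map_add, map_sub, map_one]
      ring
    · -- s = 0, t = 1
      rw [show (2*(0:ℤ)+1) = 1 by norm_num]
      have hM0 : xiM m 1 1 = 0 := by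
        rw [xiM, if_neg (by omega), if_neg (by omega)]
      rw [hM0]; ring
    · -- s = -1, t = -1
      rw [show (2*(-1:ℤ)+1) = -1 by norm_num]
      have hP0 : xiP m 1 (-1) = 0 := by
        rw [xiP, if_neg (by omega), if_neg (by omega)]
      rw [hP0]; ring
    · -- s ≤ -2
      have hP := xiP_case2 m (2*s+1) (-s-1) ht1 (by omega)
        (by rw [show (-((2*s+1 : ℤ):ℚ)-1)/2 = ((-s-1 : ℤ):ℚ) by push_cast; ring,
              Int.ceil_intCast]) (by omega)
      have hM := xiM_case2 m (2*s+1) (-s-1+1) ht1 (by omega)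
        (by rw [show (-((2*s+1 : ℤ):ℚ))/2 = ((2*(-s-1)+1 : ℤ):ℚ)/2 by push_cast; ring,
              ceil_half_odd]) (by omega)
      rw [hP, hM, hP1, hM1]
      simp only [Int.cast_neg, Int.cast_add, Int.cast_sub, Int.cast_one,
        map_neg, map_add, map_sub, map_one]
      ring
end
end

section
/- Every element f ∈ H_m is an R-linear combination of the Knutson–Tao classes: there exist h₀ ∈ R and h_{q,1}, h_{q,2} ∈ R for 1 ≤ q ≤ m such that f(t) = h₀·ξ⁰(t) + Σ_{q=1}^{m} ( h_{q,1}·ξ⁺_q(t) + h_{q,2}·ξ⁻_q(t) ) for all t ∈ V_m; moreover one can take h₀ = f(0). -/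
noncomputable section

open Finset MvPolynomial

abbrev Spoly : Type := MvPolynomial (Fin 1) ℚ

def psiE : Rpoly ≃ₐ[ℚ] Polynomial Spoly := MvPolynomial.finSuccEquiv ℚ 1

def rt (k : ℤ) : Spoly := MvPolynomial.C (k : ℚ) * X 0

def Ek (k : ℤ) : Rpoly →+* Spoly :=
  (Polynomial.evalRingHom (rt k)).comp (psiE.toRingEquiv : Rpoly ≃+* Polynomial Spoly).toRingHom

lemma psiE_C (r : ℚ) : psiE (MvPolynomial.C r) = Polynomial.C (MvPolynomial.C r) := by
  have := psiE.commutes r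
  simpa [MvPolynomial.algebraMap_eq, Polynomial.algebraMap_eq] using this

lemma psiE_va : psiE va = Polynomial.X := MvPolynomial.finSuccEquiv_X_zero

lemma psiE_vd : psiE vd = Polynomial.C (X 0) := by
  have : (1 : Fin 2) = Fin.succ 0 := rfl
  rw [vd, this]
  exact MvPolynomial.finSuccEquiv_X_succ

lemma Ek_apply (k : ℤ) (p : Rpoly) : Ek k p = Polynomial.eval (rt k) (psiE p) := rfl

lemma Ek_C (k : ℤ) (r : ℚ) : Ek k (MvPolynomial.C r) = MvPolynomial.C r := by
  rw [Ek_apply, psiE_C, Polynomial.eval_C]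

lemma Ek_va (k : ℤ) : Ek k va = rt k := by rw [Ek_apply, psiE_va, Polynomial.eval_X]

lemma Ek_vd (k : ℤ) : Ek k vd = X 0 := by rw [Ek_apply, psiE_vd, Polynomial.eval_C]

lemma psiE_lin (k : ℤ) : psiE (-va + MvPolynomial.C (k : ℚ) * vd) = -(Polynomial.X - Polynomial.C (rt k)) := by
  rw [map_add, map_neg, map_mul, psiE_va, psiE_vd, psiE_C, rt, ← Polynomial.C_mul]
  ring

lemma psiE_linP (k : ℤ) : psiE (va + MvPolynomial.C (k : ℚ) * vd) = Polynomial.X - Polynomial.C (-(rt k)) := by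
  rw [map_add, map_mul, psiE_va, psiE_vd, psiE_C, rt, ← Polynomial.C_mul, map_neg]
  ring

lemma dvd_Lneg_of_Ek (k : ℤ) (p : Rpoly) (h : Ek k p = 0) :
    (-va + MvPolynomial.C (k : ℚ) * vd) ∣ p := by
  rw [Ek_apply] at h
  have h1 : Polynomial.X - Polynomial.C (rt k) ∣ psiE p := Polynomial.dvd_iff_isRoot.mpr h
  have h2 : psiE (-va + MvPolynomial.C (k : ℚ) * vd) ∣ psiE p := by
    rw [psiE_lin]; exact (neg_dvd).mpr h1
  have := map_dvd psiE.symm h2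
  simpa using this

lemma rt_inj : Function.Injective rt := by
  intro a b hab
  have := congrArg (MvPolynomial.eval (fun _ => (1:ℚ))) hab
  simp [rt] at this
  exact_mod_cast this

/-- distinct roots ⇒ product of `X - C r` divides -/
lemma prod_X_sub_C_dvd {R : Type*} [CommRing R] [IsDomain R] (s : Finset R) (P : Polynomial R)
    (h : ∀ r ∈ s, Polynomial.X - Polynomial.C r ∣ P) :
    (∏ r ∈ s, (Polynomial.X - Polynomial.C r)) ∣ P := by
  classical
  induction s using Finset.induction_on generalizing P with
  | empty => simpa using one_dvd P
  | @insert r s hr ih =>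
    obtain ⟨Q, hQ⟩ := h r (Finset.mem_insert_self r s)
    have hrest : ∀ a ∈ s, Polynomial.X - Polynomial.C a ∣ Q := by
      intro a ha
      have hd : Polynomial.X - Polynomial.C a ∣ (Polynomial.X - Polynomial.C r) * Q := by
        rw [← hQ]; exact h a (Finset.mem_insert_of_mem ha)
      rcases (Polynomial.prime_X_sub_C a).2.2 _ _ hd with h1 | h1
      · exfalso
        have : a - r = 0 := by
          have := Polynomial.dvd_iff_isRoot.mp h1
          simpa [Polynomial.IsRoot] using this
        have : a = r := by linear_combination this
        exact hr (this ▸ ha)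
      · exact h1
    rw [Finset.prod_insert hr, hQ]
    exact mul_dvd_mul_left _ (ih Q hrest)

lemma prod_Lneg_dvd (s : Finset ℤ) (p : Rpoly)
    (h : ∀ k ∈ s, (-va + MvPolynomial.C (k : ℚ) * vd) ∣ p) :
    (∏ k ∈ s, (-va + MvPolynomial.C (k : ℚ) * vd)) ∣ p := by
  classical
  have h2 : ∀ r ∈ s.image rt, Polynomial.X - Polynomial.C r ∣ psiE p := by
    intro r hrm
    obtain ⟨k, hk, rfl⟩ := Finset.mem_image.mp hrm
    have := map_dvd psiE (h k hk)
    rw [psiE_lin] at this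
    exact (neg_dvd).mp this
  have h3 := prod_X_sub_C_dvd _ _ h2
  rw [Finset.prod_image (fun a _ b _ hab => rt_inj hab)] at h3
  have h4 : (∏ k ∈ s, -(Polynomial.X - Polynomial.C (rt k))) ∣ psiE p := by
    have hpn : (∏ k ∈ s, -(Polynomial.X - Polynomial.C (rt k)))
        = (-1) ^ s.card * ∏ k ∈ s, (Polynomial.X - Polynomial.C (rt k)) := by
      rw [← Finset.prod_const, ← Finset.prod_mul_distrib]
      exact Finset.prod_congr rfl fun k _ => by ring
    rw [hpn]
    rcases Nat.even_or_odd s.card with he | ho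
    · have : ((-1 : Polynomial Spoly)) ^ s.card = 1 := by
        simpa using Even.neg_one_pow (α := Polynomial Spoly) he
      rw [this, one_mul]; exact h3
    · have : ((-1 : Polynomial Spoly)) ^ s.card = -1 := by
        simpa using Odd.neg_one_pow (α := Polynomial Spoly) ho
      rw [this]
      have : (-1 : Polynomial Spoly) * ∏ k ∈ s, (Polynomial.X - Polynomial.C (rt k))
          = -(∏ k ∈ s, (Polynomial.X - Polynomial.C (rt k))) := by ring
      rw [this]; exact neg_dvd.mpr h3
  have h5 : psiE (∏ k ∈ s, (-va + MvPolynomial.C (k : ℚ) * vd)) ∣ psiE p := by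
    rw [map_prod]
    simpa only [psiE_lin] using h4
  have := map_dvd psiE.symm h5
  simpa using this

lemma prod_Lpos_dvd (s : Finset ℤ) (p : Rpoly)
    (h : ∀ k ∈ s, (va + MvPolynomial.C (k : ℚ) * vd) ∣ p) :
    (∏ k ∈ s, (va + MvPolynomial.C (k : ℚ) * vd)) ∣ p := by
  classical
  have h2 : ∀ r ∈ s.image (fun k => -(rt k)), Polynomial.X - Polynomial.C r ∣ psiE p := by
    intro r hrm
    obtain ⟨k, hk, rfl⟩ := Finset.mem_image.mp hrm
    have := map_dvd psiE (h k hk)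
    rwa [psiE_linP] at this
  have h3 := prod_X_sub_C_dvd _ _ h2
  rw [Finset.prod_image (fun a _ b _ hab => rt_inj (neg_injective hab))] at h3
  have h5 : psiE (∏ k ∈ s, (va + MvPolynomial.C (k : ℚ) * vd)) ∣ psiE p := by
    rw [map_prod]
    simpa only [psiE_linP] using h3
  have := map_dvd psiE.symm h5
  simpa using this

lemma Ek_Pneg (k a b : ℤ) :
    Ek k (Pneg a b) = MvPolynomial.C (∏ j ∈ Finset.Icc a b, ((j : ℚ) - k)) * (X 0) ^ (Finset.Icc a b).card := by
  rw [Pneg, map_prod]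
  have h1 : ∀ j ∈ Finset.Icc a b, Ek k (-va + MvPolynomial.C (j : ℚ) * vd)
      = MvPolynomial.C ((j : ℚ) - k) * X 0 := by
    intro j _
    rw [map_add, map_neg, map_mul, Ek_va, Ek_vd, Ek_C, rt, map_sub]
    ring
  rw [Finset.prod_congr rfl h1, Finset.prod_mul_distrib, ← map_prod, Finset.prod_const]

lemma Ek_Ppos (k a b : ℤ) :
    Ek k (Ppos a b) = MvPolynomial.C (∏ j ∈ Finset.Icc a b, ((j : ℚ) + k)) * (X 0) ^ (Finset.Icc a b).card := by
  rw [Ppos, map_prod]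
  have h1 : ∀ j ∈ Finset.Icc a b, Ek k (va + MvPolynomial.C (j : ℚ) * vd)
      = MvPolynomial.C ((j : ℚ) + k) * X 0 := by
    intro j _
    rw [map_add, map_mul, Ek_va, Ek_vd, Ek_C, rt, map_add]
    ring
  rw [Finset.prod_congr rfl h1, Finset.prod_mul_distrib, ← map_prod, Finset.prod_const]

/-- base product `∏_{j=0}^{q-1} (j + x)` -/
def Pq (q : ℕ) (x : ℚ) : ℚ := ∏ j ∈ Finset.Icc (0 : ℤ) ((q : ℤ) - 1), ((j : ℚ) + x)

lemma Icc_succ_top (a b : ℤ) (h : a ≤ b + 1) :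
    Finset.Icc a (b + 1) = insert (b + 1) (Finset.Icc a b) := by
  ext x; simp only [Finset.mem_Icc, Finset.mem_insert]; omega

lemma prod_Icc_succ_top' (a b : ℤ) (h : a ≤ b + 1) (f : ℤ → ℚ) :
    ∏ j ∈ Finset.Icc a (b + 1), f j = (∏ j ∈ Finset.Icc a b, f j) * f (b + 1) := by
  rw [Icc_succ_top a b h, Finset.prod_insert (by simp), mul_comm]

lemma Pq_succ (q : ℕ) (x : ℚ) : Pq (q + 1) x = Pq q x * ((q : ℚ) + x) := by
  unfold Pq
  have he : ((q + 1 : ℕ) : ℤ) - 1 = ((q : ℤ) - 1) + 1 := by push_cast; ring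
  rw [he, prod_Icc_succ_top' _ _ (by omega)]
  congr 1
  push_cast; ring

lemma Pq_asc (q b : ℕ) : Pq q ((b : ℚ) + 1) = (q.factorial : ℚ) * ((b + q).choose q : ℚ) := by
  induction q with
  | zero => simp [Pq]
  | succ q ih =>
    rw [Pq_succ, ih]
    have key : ((b + q + 1) * ((b + q).choose q) : ℕ) = ((b + q + 1).choose (q + 1) * (q + 1) : ℕ) :=
      Nat.add_one_mul_choose_eq (b + q) q
    have key' : (((b + q + 1) : ℚ) * ((b + q).choose q : ℚ)) = ((b + q + 1).choose (q + 1) : ℚ) * ((q : ℚ) + 1) := by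
      exact_mod_cast congrArg (Nat.cast : ℕ → ℚ) key
    push_cast [Nat.factorial_succ, show b + (q + 1) = b + q + 1 from rfl]
    nlinarith [key']

lemma prod_Icc_reflect (a b : ℤ) (g : ℤ → ℚ) :
    ∏ j ∈ Finset.Icc a b, g j = ∏ j ∈ Finset.Icc a b, g (a + b - j) := by
  apply Finset.prod_nbij' (fun j => a + b - j) (fun j => a + b - j)
  all_goals intros; simp_all [Finset.mem_Icc]; try omega

lemma Pq_desc (q b : ℕ) : Pq q (-((q : ℚ) + b)) = (-1) ^ q * (q.factorial : ℚ) * ((b + q).choose q : ℚ) := by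
  have h1 : Pq q (-((q : ℚ) + b)) = ∏ j ∈ Finset.Icc (0 : ℤ) ((q : ℤ) - 1), (-(((j : ℚ)) + ((b : ℚ) + 1))) := by
    unfold Pq
    rw [prod_Icc_reflect]
    apply Finset.prod_congr rfl
    intro j hj
    push_cast
    ring
  rw [h1]
  have h2 : ∏ j ∈ Finset.Icc (0 : ℤ) ((q : ℤ) - 1), (-(((j : ℚ)) + ((b : ℚ) + 1)))
      = (-1) ^ q * Pq q ((b : ℚ) + 1) := by
    have hc : (Finset.Icc (0 : ℤ) ((q : ℤ) - 1)).card = q := by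
      rw [Int.card_Icc]; omega
    have hstep : ∀ j ∈ Finset.Icc (0 : ℤ) ((q : ℤ) - 1),
        (-(((j : ℚ)) + ((b : ℚ) + 1))) = (-1) * (((j : ℚ)) + ((b : ℚ) + 1)) := by
      intros; ring
    rw [Finset.prod_congr rfl hstep, Finset.prod_mul_distrib, Finset.prod_const, hc]
    rfl
  rw [h2, Pq_asc]
  ring

def Phi (q c : ℕ) (x : ℚ) : ℚ := (((c + q).choose q : ℕ) : ℚ) * Pq q x

lemma Phi_asc_symm (q a b : ℕ) : Phi q a ((b : ℚ) + 1) = Phi q b ((a : ℚ) + 1) := by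
  unfold Phi
  rw [Pq_asc, Pq_asc]
  ring

lemma Phi_desc_symm (q a b : ℕ) : Phi q a (-((q : ℚ) + b)) = Phi q b (-((q : ℚ) + a)) := by
  unfold Phi
  rw [Pq_desc, Pq_desc]
  ring

lemma Phi_zero (q c : ℕ) (x : ℤ) (h1 : 1 - (q : ℤ) ≤ x) (h2 : x ≤ 0) :
    Phi q c (x : ℚ) = 0 := by
  unfold Phi Pq
  have hmem : -x ∈ Finset.Icc (0 : ℤ) ((q : ℤ) - 1) := by
    simp only [Finset.mem_Icc]; omega
  rw [Finset.prod_eq_zero hmem (by push_cast; ring)]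
  ring

-- ceiling helper
lemma ceil_helper (z e : ℤ) (he : e = 0 ∨ e = 1) (x : ℚ)
    (hx : x = ((2 * z + e + 1 : ℤ) : ℚ)) : ⌈x / 2⌉ = z + 1 := by
  rcases he with rfl | rfl
  · rw [Int.ceil_eq_iff]
    push_cast [hx]
    constructor <;> push_cast <;> linarith
  · have : x / 2 = ((z + 1 : ℤ) : ℚ) := by rw [hx]; push_cast; ring
    rw [this, Int.ceil_intCast]

lemma B_nat (n : ℤ) (n' q : ℕ) (h : n = (n' : ℤ)) : B n q = ((n'.choose q : ℕ) : ℚ) := by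
  rw [B, h, Int.toNat_natCast]

lemma card_Icc_q (a : ℤ) (q : ℕ) : (Finset.Icc a (a + q - 1)).card = q := by
  rw [Int.card_Icc]; omega

lemma prod_Icc_shift (q : ℕ) (a : ℤ) (g : ℤ → ℚ) :
    ∏ j ∈ Finset.Icc a (a + (q : ℤ) - 1), g j = ∏ j ∈ Finset.Icc (0 : ℤ) ((q : ℤ) - 1), g (j + a) := by
  have h1 : Finset.Icc a (a + (q : ℤ) - 1) = Finset.Icc (0 + a) (((q : ℤ) - 1) + a) := by
    congr 1 <;> ring
  rw [h1, ← Finset.map_add_right_Icc, Finset.prod_map]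
  rfl

lemma eval_xiP_pos (m : ℤ) (q a : ℕ) (e : ℤ) (he : e = 0 ∨ e = 1) (u : ℤ)
    (hu : u = (q : ℤ) + 2 * a + e) (hum : u ≤ m) (k : ℤ) :
    Ek k (xiP m q u) = MvPolynomial.C (Phi q a ((a : ℚ) - (k : ℚ))) * (X 0 : Spoly) ^ q := by
  have hcond : (q : ℤ) ≤ u ∧ u ≤ m := ⟨by omega, hum⟩
  rw [xiP, if_pos hcond]
  have hceil : ⌈((u : ℚ) - (q : ℚ) + 1) / 2⌉ = (a : ℤ) + 1 := by
    apply ceil_helper a e he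
    have : (u : ℚ) = ((q : ℤ) + 2 * a + e : ℤ) := by exact_mod_cast congrArg (fun z : ℤ => (z : ℚ)) hu
    push_cast [this]; push_cast; ring
  rw [hceil]
  have hI : Pneg ((a : ℤ) + 1 - 1) ((a : ℤ) + 1 + q - 2) = Pneg a ((a : ℤ) + q - 1) := by
    congr 1 <;> ring
  rw [hI, map_mul, Ek_C, Ek_Pneg, B_nat _ (a + q) q (by push_cast; ring), card_Icc_q]
  have hprod : ∏ j ∈ Finset.Icc (a : ℤ) ((a : ℤ) + q - 1), ((j : ℚ) - k)
      = Pq q ((a : ℚ) - (k : ℚ)) := by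
    rw [prod_Icc_shift q a (fun j => (j : ℚ) - k)]
    apply Finset.prod_congr rfl
    intro j _; push_cast; ring
  rw [hprod, Phi, map_mul]
  ring

lemma eval_xiP_neg (m : ℤ) (q b : ℕ) (e : ℤ) (he : e = 0 ∨ e = 1) (u : ℤ)
    (hu : -u = (q : ℤ) + 1 + 2 * b + e) (hum : -m ≤ u) (hq : 1 ≤ q) (k : ℤ) :
    Ek k (xiP m q u) = MvPolynomial.C (Phi q b ((b : ℚ) + 2 + (k : ℚ))) * (X 0 : Spoly) ^ q := by
  have hcond1 : ¬((q : ℤ) ≤ u ∧ u ≤ m) := by omega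
  have hcond : -m ≤ u ∧ u ≤ -((q : ℤ) + 1) := ⟨hum, by omega⟩
  rw [xiP, if_neg hcond1, if_pos hcond]
  have hceil : ⌈(-(u : ℚ) - (q : ℚ)) / 2⌉ = (b : ℤ) + 1 := by
    apply ceil_helper b e he
    have : ((-u : ℤ) : ℚ) = ((q : ℤ) + 1 + 2 * b + e : ℤ) := by
      exact_mod_cast congrArg (fun z : ℤ => (z : ℚ)) hu
    push_cast at this ⊢; linarith
  rw [hceil]
  have hI : Ppos ((b : ℤ) + 1 + 1) ((b : ℤ) + 1 + q) = Ppos ((b : ℤ) + 2) (((b : ℤ) + 2) + q - 1) := by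
    congr 1 <;> ring
  rw [hI, map_mul, Ek_C, Ek_Ppos, B_nat _ (b + q) q (by push_cast; ring), card_Icc_q]
  have hprod : ∏ j ∈ Finset.Icc ((b : ℤ) + 2) (((b : ℤ) + 2) + q - 1), ((j : ℚ) + k)
      = Pq q ((b : ℚ) + 2 + (k : ℚ)) := by
    rw [prod_Icc_shift q ((b : ℤ) + 2) (fun j => (j : ℚ) + k)]
    apply Finset.prod_congr rfl
    intro j _; push_cast; ring
  rw [hprod, Phi, map_mul]
  ring

lemma eval_xiM_pos (m : ℤ) (q a : ℕ) (e : ℤ) (he : e = 0 ∨ e = 1) (u : ℤ)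
    (hu : u = (q : ℤ) + 1 + 2 * a + e) (hum : u ≤ m) (k : ℤ) :
    Ek k (xiM m q u) = MvPolynomial.C (Phi q a ((a : ℚ) + 1 - (k : ℚ))) * (X 0 : Spoly) ^ q := by
  have hcond : (q : ℤ) + 1 ≤ u ∧ u ≤ m := ⟨by omega, hum⟩
  rw [xiM, if_pos hcond]
  have hceil : ⌈((u : ℚ) - (q : ℚ)) / 2⌉ = (a : ℤ) + 1 := by
    apply ceil_helper a e he
    have : (u : ℚ) = ((q : ℤ) + 1 + 2 * a + e : ℤ) := by exact_mod_cast congrArg (fun z : ℤ => (z : ℚ)) hu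
    push_cast [this]; push_cast; ring
  rw [hceil]
  have hI : Pneg ((a : ℤ) + 1) ((a : ℤ) + 1 + q - 1) = Pneg ((a : ℤ) + 1) (((a : ℤ) + 1) + q - 1) := by
    congr 1
  rw [hI, map_mul, Ek_C, Ek_Pneg, B_nat _ (a + q) q (by push_cast; ring), card_Icc_q]
  have hprod : ∏ j ∈ Finset.Icc ((a : ℤ) + 1) (((a : ℤ) + 1) + q - 1), ((j : ℚ) - k)
      = Pq q ((a : ℚ) + 1 - (k : ℚ)) := by
    rw [prod_Icc_shift q ((a : ℤ) + 1) (fun j => (j : ℚ) - k)]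
    apply Finset.prod_congr rfl
    intro j _; push_cast; ring
  rw [hprod, Phi, map_mul]
  ring

lemma eval_xiM_neg (m : ℤ) (q b : ℕ) (e : ℤ) (he : e = 0 ∨ e = 1) (u : ℤ)
    (hu : -u = (q : ℤ) + 2 * b + e) (hum : -m ≤ u) (hq : 1 ≤ q) (k : ℤ) :
    Ek k (xiM m q u) = MvPolynomial.C (Phi q b ((b : ℚ) + 1 + (k : ℚ))) * (X 0 : Spoly) ^ q := by
  have hcond1 : ¬((q : ℤ) + 1 ≤ u ∧ u ≤ m) := by omega
  have hcond : -m ≤ u ∧ u ≤ -(q : ℤ) := ⟨hum, by omega⟩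
  rw [xiM, if_neg hcond1, if_pos hcond]
  have hceil : ⌈(-(u : ℚ) - (q : ℚ) + 1) / 2⌉ = (b : ℤ) + 1 := by
    apply ceil_helper b e he
    have : ((-u : ℤ) : ℚ) = ((q : ℤ) + 2 * b + e : ℤ) := by
      exact_mod_cast congrArg (fun z : ℤ => (z : ℚ)) hu
    push_cast at this ⊢; linarith
  rw [hceil]
  have hI : Ppos ((b : ℤ) + 1) ((b : ℤ) + 1 + q - 1) = Ppos ((b : ℤ) + 1) (((b : ℤ) + 1) + q - 1) := by
    congr 1
  rw [hI, map_mul, Ek_C, Ek_Ppos, B_nat _ (b + q) q (by push_cast; ring), card_Icc_q]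
  have hprod : ∏ j ∈ Finset.Icc ((b : ℤ) + 1) (((b : ℤ) + 1) + q - 1), ((j : ℚ) + k)
      = Pq q ((b : ℚ) + 1 + (k : ℚ)) := by
    rw [prod_Icc_shift q ((b : ℤ) + 1) (fun j => (j : ℚ) + k)]
    apply Finset.prod_congr rfl
    intro j _; push_cast; ring
  rw [hprod, Phi, map_mul]
  ring

lemma xiP_mid (m : ℤ) (q : ℕ) (u : ℤ) (h1 : -(q : ℤ) ≤ u) (h2 : u ≤ (q : ℤ) - 1) :
    xiP m q u = 0 := by
  rw [xiP, if_neg (by omega), if_neg (by omega)]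

lemma xiM_mid (m : ℤ) (q : ℕ) (u : ℤ) (h1 : -(q : ℤ) + 1 ≤ u) (h2 : u ≤ (q : ℤ)) :
    xiM m q u = 0 := by
  rw [xiM, if_neg (by omega), if_neg (by omega)]

lemma decomp (c s : ℤ) (h : c ≤ s) :
    ∃ (a : ℕ) (e : ℤ), (e = 0 ∨ e = 1) ∧ s = c + 2 * a + e := by
  rcases Int.even_or_odd (s - c) with ⟨x, hx⟩ | ⟨x, hx⟩
  · refine ⟨x.toNat, 0, Or.inl rfl, ?_⟩
    have := Int.toNat_of_nonneg (show (0 : ℤ) ≤ x by omega)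
    omega
  · refine ⟨x.toNat, 1, Or.inr rfl, ?_⟩
    have := Int.toNat_of_nonneg (show (0 : ℤ) ≤ x by omega)
    omega

-- Part 4: edge lemmas
lemma cast_arg (x y : ℤ) (h : x = y) : (x : ℚ) = (y : ℚ) := by exact_mod_cast h

lemma edgeP (m : ℤ) (q : ℕ) (hq : 1 ≤ q) (s t k : ℤ) (hst : s + t = 2 * k + 1)
    (hs1 : -m ≤ s) (hs2 : s ≤ m) (ht1 : -m ≤ t) (ht2 : t ≤ m) :
    Ek k (xiP m q s) = Ek k (xiP m q t) := by
  rcases le_or_gt (q : ℤ) s with hsp | hs'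
  · obtain ⟨a, ea, hea, hsd⟩ := decomp (q : ℤ) s hsp
    rcases le_or_gt (q : ℤ) t with htp | ht'
    · -- pos-pos
      obtain ⟨b, eb, heb, htd⟩ := decomp (q : ℤ) t htp
      rw [eval_xiP_pos m q a ea hea s hsd hs2 k, eval_xiP_pos m q b eb heb t htd ht2 k]
      have hk : (a : ℤ) - k = -((q : ℤ) + b) := by omega
      have hk' : (b : ℤ) - k = -((q : ℤ) + a) := by omega
      have h1 : (a : ℚ) - (k : ℚ) = -((q : ℚ) + (b : ℚ)) := by
        have := cast_arg _ _ hk; push_cast at this; linarith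
      have h2 : (b : ℚ) - (k : ℚ) = -((q : ℚ) + (a : ℚ)) := by
        have := cast_arg _ _ hk'; push_cast at this; linarith
      rw [h1, h2, Phi_desc_symm]
    · rcases le_or_gt t (-((q : ℤ) + 1)) with htn | ht''
      · -- pos-neg
        obtain ⟨b, eb, heb, htd⟩ := decomp ((q : ℤ) + 1) (-t) (by omega)
        rw [eval_xiP_pos m q a ea hea s hsd hs2 k,
            eval_xiP_neg m q b eb heb t (by omega) ht1 hq k]
        have hk : (a : ℤ) - k = (b : ℤ) + 1 := by omega
        have hk' : (b : ℤ) + 2 + k = (a : ℤ) + 1 := by omega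
        have h1 : (a : ℚ) - (k : ℚ) = (b : ℚ) + 1 := by
          have := cast_arg _ _ hk; push_cast at this; linarith
        have h2 : (b : ℚ) + 2 + (k : ℚ) = (a : ℚ) + 1 := by
          have := cast_arg _ _ hk'; push_cast at this; linarith
        rw [h1, h2, Phi_asc_symm]
      · -- pos-mid
        rw [eval_xiP_pos m q a ea hea s hsd hs2 k, xiP_mid m q t (by omega) (by omega), map_zero]
        have hz : Phi q a (((a : ℤ) - k : ℤ) : ℚ) = 0 := Phi_zero q a _ (by omega) (by omega)
        have harg : (((a : ℤ) - k : ℤ) : ℚ) = (a : ℚ) - (k : ℚ) := by push_cast; ring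
        rw [harg] at hz
        rw [hz, map_zero, zero_mul]
  · rcases le_or_gt s (-((q : ℤ) + 1)) with hsn | hs''
    · obtain ⟨a, ea, hea, hsd⟩ := decomp ((q : ℤ) + 1) (-s) (by omega)
      rcases le_or_gt (q : ℤ) t with htp | ht'
      · -- neg-pos
        obtain ⟨b, eb, heb, htd⟩ := decomp (q : ℤ) t htp
        rw [eval_xiP_neg m q a ea hea s (by omega) hs1 hq k,
            eval_xiP_pos m q b eb heb t htd ht2 k]
        have hk : (a : ℤ) + 2 + k = (b : ℤ) + 1 := by omega
        have hk' : (b : ℤ) - k = (a : ℤ) + 1 := by omega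
        have h1 : (a : ℚ) + 2 + (k : ℚ) = (b : ℚ) + 1 := by
          have := cast_arg _ _ hk; push_cast at this; linarith
        have h2 : (b : ℚ) - (k : ℚ) = (a : ℚ) + 1 := by
          have := cast_arg _ _ hk'; push_cast at this; linarith
        rw [h1, h2, Phi_asc_symm]
      · rcases le_or_gt t (-((q : ℤ) + 1)) with htn | ht''
        · -- neg-neg
          obtain ⟨b, eb, heb, htd⟩ := decomp ((q : ℤ) + 1) (-t) (by omega)
          rw [eval_xiP_neg m q a ea hea s (by omega) hs1 hq k,
              eval_xiP_neg m q b eb heb t (by omega) ht1 hq k]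
          have hk : (a : ℤ) + 2 + k = -((q : ℤ) + b) := by omega
          have hk' : (b : ℤ) + 2 + k = -((q : ℤ) + a) := by omega
          have h1 : (a : ℚ) + 2 + (k : ℚ) = -((q : ℚ) + (b : ℚ)) := by
            have := cast_arg _ _ hk; push_cast at this; linarith
          have h2 : (b : ℚ) + 2 + (k : ℚ) = -((q : ℚ) + (a : ℚ)) := by
            have := cast_arg _ _ hk'; push_cast at this; linarith
          rw [h1, h2, Phi_desc_symm]
        · -- neg-mid
          rw [eval_xiP_neg m q a ea hea s (by omega) hs1 hq k,
              xiP_mid m q t (by omega) (by omega), map_zero]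
          have hz : Phi q a (((a : ℤ) + 2 + k : ℤ) : ℚ) = 0 := Phi_zero q a _ (by omega) (by omega)
          have harg : (((a : ℤ) + 2 + k : ℤ) : ℚ) = (a : ℚ) + 2 + (k : ℚ) := by push_cast; ring
          rw [harg] at hz
          rw [hz, map_zero, zero_mul]
    · rcases le_or_gt (q : ℤ) t with htp | ht'
      · -- mid-pos
        obtain ⟨b, eb, heb, htd⟩ := decomp (q : ℤ) t htp
        rw [eval_xiP_pos m q b eb heb t htd ht2 k, xiP_mid m q s (by omega) (by omega), map_zero]
        have hz : Phi q b (((b : ℤ) - k : ℤ) : ℚ) = 0 := Phi_zero q b _ (by omega) (by omega)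
        have harg : (((b : ℤ) - k : ℤ) : ℚ) = (b : ℚ) - (k : ℚ) := by push_cast; ring
        rw [harg] at hz
        rw [hz, map_zero, zero_mul]
      · rcases le_or_gt t (-((q : ℤ) + 1)) with htn | ht''
        · -- mid-neg
          obtain ⟨b, eb, heb, htd⟩ := decomp ((q : ℤ) + 1) (-t) (by omega)
          rw [eval_xiP_neg m q b eb heb t (by omega) ht1 hq k,
              xiP_mid m q s (by omega) (by omega), map_zero]
          have hz : Phi q b (((b : ℤ) + 2 + k : ℤ) : ℚ) = 0 := Phi_zero q b _ (by omega) (by omega)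
          have harg : (((b : ℤ) + 2 + k : ℤ) : ℚ) = (b : ℚ) + 2 + (k : ℚ) := by push_cast; ring
          rw [harg] at hz
          rw [hz, map_zero, zero_mul]
        · -- mid-mid
          rw [xiP_mid m q s (by omega) (by omega), xiP_mid m q t (by omega) (by omega)]

lemma edgeM (m : ℤ) (q : ℕ) (hq : 1 ≤ q) (s t k : ℤ) (hst : s + t = 2 * k + 1)
    (hs1 : -m ≤ s) (hs2 : s ≤ m) (ht1 : -m ≤ t) (ht2 : t ≤ m) :
    Ek k (xiM m q s) = Ek k (xiM m q t) := by
  rcases le_or_gt ((q : ℤ) + 1) s with hsp | hs'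
  · obtain ⟨a, ea, hea, hsd⟩ := decomp ((q : ℤ) + 1) s hsp
    rcases le_or_gt ((q : ℤ) + 1) t with htp | ht'
    · -- pos-pos
      obtain ⟨b, eb, heb, htd⟩ := decomp ((q : ℤ) + 1) t htp
      rw [eval_xiM_pos m q a ea hea s hsd hs2 k, eval_xiM_pos m q b eb heb t htd ht2 k]
      have hk : (a : ℤ) + 1 - k = -((q : ℤ) + b) := by omega
      have hk' : (b : ℤ) + 1 - k = -((q : ℤ) + a) := by omega
      have h1 : (a : ℚ) + 1 - (k : ℚ) = -((q : ℚ) + (b : ℚ)) := by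
        have := cast_arg _ _ hk; push_cast at this; linarith
      have h2 : (b : ℚ) + 1 - (k : ℚ) = -((q : ℚ) + (a : ℚ)) := by
        have := cast_arg _ _ hk'; push_cast at this; linarith
      rw [h1, h2, Phi_desc_symm]
    · rcases le_or_gt t (-(q : ℤ)) with htn | ht''
      · -- pos-neg
        obtain ⟨b, eb, heb, htd⟩ := decomp (q : ℤ) (-t) (by omega)
        rw [eval_xiM_pos m q a ea hea s hsd hs2 k,
            eval_xiM_neg m q b eb heb t (by omega) ht1 hq k]
        have hk : (a : ℤ) + 1 - k = (b : ℤ) + 1 := by omega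
        have hk' : (b : ℤ) + 1 + k = (a : ℤ) + 1 := by omega
        have h1 : (a : ℚ) + 1 - (k : ℚ) = (b : ℚ) + 1 := by
          have := cast_arg _ _ hk; push_cast at this; linarith
        have h2 : (b : ℚ) + 1 + (k : ℚ) = (a : ℚ) + 1 := by
          have := cast_arg _ _ hk'; push_cast at this; linarith
        rw [h1, h2, Phi_asc_symm]
      · -- pos-mid
        rw [eval_xiM_pos m q a ea hea s hsd hs2 k, xiM_mid m q t (by omega) (by omega), map_zero]
        have hz : Phi q a (((a : ℤ) + 1 - k : ℤ) : ℚ) = 0 := Phi_zero q a _ (by omega) (by omega)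
        have harg : (((a : ℤ) + 1 - k : ℤ) : ℚ) = (a : ℚ) + 1 - (k : ℚ) := by push_cast; ring
        rw [harg] at hz
        rw [hz, map_zero, zero_mul]
  · rcases le_or_gt s (-(q : ℤ)) with hsn | hs''
    · obtain ⟨a, ea, hea, hsd⟩ := decomp (q : ℤ) (-s) (by omega)
      rcases le_or_gt ((q : ℤ) + 1) t with htp | ht'
      · -- neg-pos
        obtain ⟨b, eb, heb, htd⟩ := decomp ((q : ℤ) + 1) t htp
        rw [eval_xiM_neg m q a ea hea s (by omega) hs1 hq k,
            eval_xiM_pos m q b eb heb t htd ht2 k]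
        have hk : (a : ℤ) + 1 + k = (b : ℤ) + 1 := by omega
        have hk' : (b : ℤ) + 1 - k = (a : ℤ) + 1 := by omega
        have h1 : (a : ℚ) + 1 + (k : ℚ) = (b : ℚ) + 1 := by
          have := cast_arg _ _ hk; push_cast at this; linarith
        have h2 : (b : ℚ) + 1 - (k : ℚ) = (a : ℚ) + 1 := by
          have := cast_arg _ _ hk'; push_cast at this; linarith
        rw [h1, h2, Phi_asc_symm]
      · rcases le_or_gt t (-(q : ℤ)) with htn | ht''
        · -- neg-neg
          obtain ⟨b, eb, heb, htd⟩ := decomp (q : ℤ) (-t) (by omega)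
          rw [eval_xiM_neg m q a ea hea s (by omega) hs1 hq k,
              eval_xiM_neg m q b eb heb t (by omega) ht1 hq k]
          have hk : (a : ℤ) + 1 + k = -((q : ℤ) + b) := by omega
          have hk' : (b : ℤ) + 1 + k = -((q : ℤ) + a) := by omega
          have h1 : (a : ℚ) + 1 + (k : ℚ) = -((q : ℚ) + (b : ℚ)) := by
            have := cast_arg _ _ hk; push_cast at this; linarith
          have h2 : (b : ℚ) + 1 + (k : ℚ) = -((q : ℚ) + (a : ℚ)) := by
            have := cast_arg _ _ hk'; push_cast at this; linarith
          rw [h1, h2, Phi_desc_symm]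
        · -- neg-mid
          rw [eval_xiM_neg m q a ea hea s (by omega) hs1 hq k,
              xiM_mid m q t (by omega) (by omega), map_zero]
          have hz : Phi q a (((a : ℤ) + 1 + k : ℤ) : ℚ) = 0 := Phi_zero q a _ (by omega) (by omega)
          have harg : (((a : ℤ) + 1 + k : ℤ) : ℚ) = (a : ℚ) + 1 + (k : ℚ) := by push_cast; ring
          rw [harg] at hz
          rw [hz, map_zero, zero_mul]
    · rcases le_or_gt ((q : ℤ) + 1) t with htp | ht'
      · -- mid-pos
        obtain ⟨b, eb, heb, htd⟩ := decomp ((q : ℤ) + 1) t htp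
        rw [eval_xiM_pos m q b eb heb t htd ht2 k, xiM_mid m q s (by omega) (by omega), map_zero]
        have hz : Phi q b (((b : ℤ) + 1 - k : ℤ) : ℚ) = 0 := Phi_zero q b _ (by omega) (by omega)
        have harg : (((b : ℤ) + 1 - k : ℤ) : ℚ) = (b : ℚ) + 1 - (k : ℚ) := by push_cast; ring
        rw [harg] at hz
        rw [hz, map_zero, zero_mul]
      · rcases le_or_gt t (-(q : ℤ)) with htn | ht''
        · -- mid-neg
          obtain ⟨b, eb, heb, htd⟩ := decomp (q : ℤ) (-t) (by omega)
          rw [eval_xiM_neg m q b eb heb t (by omega) ht1 hq k,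
              xiM_mid m q s (by omega) (by omega), map_zero]
          have hz : Phi q b (((b : ℤ) + 1 + k : ℤ) : ℚ) = 0 := Phi_zero q b _ (by omega) (by omega)
          have harg : (((b : ℤ) + 1 + k : ℤ) : ℚ) = (b : ℚ) + 1 + (k : ℚ) := by push_cast; ring
          rw [harg] at hz
          rw [hz, map_zero, zero_mul]
        · -- mid-mid
          rw [xiM_mid m q s (by omega) (by omega), xiM_mid m q t (by omega) (by omega)]

lemma xiP_apex (m : ℤ) (q : ℕ) (hq : 1 ≤ q) (hm : (q : ℤ) ≤ m) :
    xiP m q (q : ℤ) = Pneg 0 ((q : ℤ) - 1) := by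
  rw [xiP, if_pos ⟨le_refl _, hm⟩]
  have hceil : ⌈((((q : ℤ) : ℤ) : ℚ) - (q : ℚ) + 1) / 2⌉ = (0 : ℤ) + 1 :=
    ceil_helper 0 0 (Or.inl rfl) _ (by push_cast; ring)
  rw [hceil]
  rw [B_nat _ q q (by push_cast; ring)]
  have hI : Pneg ((0 : ℤ) + 1 - 1) ((0 : ℤ) + 1 + q - 2) = Pneg 0 ((q : ℤ) - 1) := by
    congr 1 <;> ring
  rw [hI, Nat.choose_self]
  simp

lemma xiM_nadir (m : ℤ) (q : ℕ) (hq : 1 ≤ q) (hm : -m ≤ -(q : ℤ)) :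
    xiM m q (-(q : ℤ)) = Ppos 1 (q : ℤ) := by
  rw [xiM, if_neg (by omega), if_pos ⟨hm, le_refl _⟩]
  have hceil : ⌈(-((-(q : ℤ) : ℤ) : ℚ) - (q : ℚ) + 1) / 2⌉ = (0 : ℤ) + 1 :=
    ceil_helper 0 0 (Or.inl rfl) _ (by push_cast; ring)
  rw [hceil]
  rw [B_nat _ q q (by push_cast; ring)]
  have hI : Ppos ((0 : ℤ) + 1) ((0 : ℤ) + 1 + q - 1) = Ppos 1 (q : ℤ) := by
    congr 1 <;> ring
  rw [hI, Nat.choose_self]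
  simp

lemma w_sub (s t k : ℤ) (h : s + t = 2 * k + 1) :
    w s - w t = MvPolynomial.C ((s : ℚ) - (t : ℚ)) * (-va + MvPolynomial.C (k : ℚ) * vd) := by
  have hk : (s : ℚ) + t = 2 * k + 1 := by exact_mod_cast cast_arg _ _ h
  have hA : (1 - 2 * (s : ℚ)) / 2 - (1 - 2 * (t : ℚ)) / 2 = -((s : ℚ) - t) := by ring
  have hB : ((s : ℚ) * ((s : ℚ) - 1)) / 2 - ((t : ℚ) * ((t : ℚ) - 1)) / 2 = ((s : ℚ) - t) * k := by
    linear_combination (((s : ℚ) - t) / 2) * hk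
  rw [w, w]
  calc MvPolynomial.C ((1 - 2 * (s : ℚ)) / 2) * va + MvPolynomial.C (((s : ℚ) * ((s : ℚ) - 1)) / 2) * vd
        - (MvPolynomial.C ((1 - 2 * (t : ℚ)) / 2) * va + MvPolynomial.C (((t : ℚ) * ((t : ℚ) - 1)) / 2) * vd)
      = MvPolynomial.C ((1 - 2 * (s : ℚ)) / 2 - (1 - 2 * (t : ℚ)) / 2) * va
        + MvPolynomial.C (((s : ℚ) * ((s : ℚ) - 1)) / 2 - ((t : ℚ) * ((t : ℚ) - 1)) / 2) * vd := by
        rw [map_sub, map_sub]; ring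
    _ = MvPolynomial.C ((s : ℚ) - (t : ℚ)) * (-va + MvPolynomial.C (k : ℚ) * vd) := by
        rw [hA, hB, map_neg, map_mul]; ring

/-- every `f ∈ H_m` is an `R`-linear combination of the Knutson–Tao
classes, with `h₀ = f(0)`. -/
theorem statement17 (m : ℕ) (hm : 1 ≤ m) (f : ℤ → Rpoly)
    (hf : ∀ s t : ℤ, -(m : ℤ) ≤ s → s ≤ (m : ℤ) → -(m : ℤ) ≤ t → t ≤ (m : ℤ) →
      |t| < |s| → Odd (|s| - |t|) → (w s - w t) ∣ (f s - f t)) :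
    ∃ (h0 : Rpoly) (h1 h2 : ℕ → Rpoly), h0 = f 0 ∧
      ∀ t : ℤ, -(m : ℤ) ≤ t → t ≤ (m : ℤ) →
        f t = h0 + ∑ q ∈ Finset.Icc 1 m, (h1 q * xiP m q t + h2 q * xiM m q t) := by
  classical
  have key : ∀ n : ℕ, n ≤ m → ∃ h1 h2 : ℕ → Rpoly,
      (∀ q : ℕ, n < q → h1 q = 0 ∧ h2 q = 0) ∧
      (∀ t : ℤ, -(n : ℤ) ≤ t → t ≤ (n : ℤ) →
        f t = f 0 + ∑ q ∈ Finset.Icc 1 m, (h1 q * xiP m q t + h2 q * xiM m q t)) := by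
    intro n
    induction n with
    | zero =>
      intro _
      refine ⟨0, 0, fun q _ => ⟨rfl, rfl⟩, ?_⟩
      intro t ht1 ht2
      have : t = 0 := by omega
      subst this
      simp
    | succ n ih =>
      intro hn1
      obtain ⟨h1, h2, hsupp, heq⟩ := ih (by omega)
      set S : ℤ → Rpoly := fun u => ∑ q ∈ Finset.Icc 1 m, (h1 q * xiP m q u + h2 q * xiM m q u)
        with hS
      have hs2 : ((n : ℤ) + 1) ≤ (m : ℤ) := by omega
      have hs1 : -(m : ℤ) ≤ (n : ℤ) + 1 := by omega
      -- divisibility of remainder at the positive new vertex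
      have hdvdP : Pneg 0 (n : ℤ) ∣ (f ((n : ℤ) + 1) - f 0 - S ((n : ℤ) + 1)) := by
        rw [Pneg]
        apply prod_Lneg_dvd
        intro k hk
        rw [Finset.mem_Icc] at hk
        set t : ℤ := 2 * k - n with htdef
        have ht1 : -(m : ℤ) ≤ t := by omega
        have ht2 : t ≤ (m : ℤ) := by omega
        have habs : |t| < |(n : ℤ) + 1| := by
          rw [Int.abs_eq_natAbs, Int.abs_eq_natAbs]; omega
        have hodd : Odd (|(n : ℤ) + 1| - |t|) := by
          rw [Int.odd_iff, Int.abs_eq_natAbs, Int.abs_eq_natAbs]; omega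
        have hdvd1 := hf ((n : ℤ) + 1) t hs1 hs2 ht1 ht2 habs hodd
        have hws := w_sub ((n : ℤ) + 1) t k (by omega)
        have hL1 : (-va + MvPolynomial.C (k : ℚ) * vd) ∣ f ((n : ℤ) + 1) - f t := by
          refine dvd_trans ?_ hdvd1
          rw [hws]
          exact dvd_mul_left _ _
        have hL2 : (-va + MvPolynomial.C (k : ℚ) * vd) ∣ S ((n : ℤ) + 1) - S t := by
          rw [hS]
          simp only
          rw [← Finset.sum_sub_distrib]
          apply Finset.dvd_sum
          intro q hq
          have hq1 : 1 ≤ q := (Finset.mem_Icc.mp hq).1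
          have hedgeP := edgeP (m : ℤ) q hq1 ((n : ℤ) + 1) t k (by omega) hs1 hs2 ht1 ht2
          have hedgeM := edgeM (m : ℤ) q hq1 ((n : ℤ) + 1) t k (by omega) hs1 hs2 ht1 ht2
          have hdP : (-va + MvPolynomial.C (k : ℚ) * vd) ∣ (xiP m q ((n : ℤ) + 1) - xiP m q t) :=
            dvd_Lneg_of_Ek k _ (by rw [map_sub, hedgeP, sub_self])
          have hdM : (-va + MvPolynomial.C (k : ℚ) * vd) ∣ (xiM m q ((n : ℤ) + 1) - xiM m q t) :=
            dvd_Lneg_of_Ek k _ (by rw [map_sub, hedgeM, sub_self])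
          have hre : (h1 q * xiP m q ((n : ℤ) + 1) + h2 q * xiM m q ((n : ℤ) + 1))
              - (h1 q * xiP m q t + h2 q * xiM m q t)
              = h1 q * (xiP m q ((n : ℤ) + 1) - xiP m q t)
                + h2 q * (xiM m q ((n : ℤ) + 1) - xiM m q t) := by ring
          rw [hre]
          exact dvd_add (Dvd.dvd.mul_left hdP _) (Dvd.dvd.mul_left hdM _)
        have hftS : f t = f 0 + S t := heq t (by omega) (by omega)
        have hre2 : f ((n : ℤ) + 1) - f 0 - S ((n : ℤ) + 1)
            = (f ((n : ℤ) + 1) - f t) - (S ((n : ℤ) + 1) - S t) := by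
          rw [hftS]; ring
        rw [hre2]
        exact dvd_sub hL1 hL2
      obtain ⟨c1, hc1⟩ := hdvdP
      -- divisibility of remainder at the negative new vertex
      have hdvdM : Ppos 1 ((n : ℤ) + 1) ∣ (f (-((n : ℤ) + 1)) - f 0 - S (-((n : ℤ) + 1))) := by
        rw [Ppos]
        apply prod_Lpos_dvd
        intro j hj
        rw [Finset.mem_Icc] at hj
        set k : ℤ := -j with hkdef
        set t : ℤ := (n : ℤ) + 2 - 2 * j with htdef
        have ht1 : -(m : ℤ) ≤ t := by omega
        have ht2 : t ≤ (m : ℤ) := by omega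
        have hs1' : -(m : ℤ) ≤ -((n : ℤ) + 1) := by omega
        have hs2' : -((n : ℤ) + 1) ≤ (m : ℤ) := by omega
        have habs : |t| < |-((n : ℤ) + 1)| := by
          rw [Int.abs_eq_natAbs, Int.abs_eq_natAbs]; omega
        have hodd : Odd (|-((n : ℤ) + 1)| - |t|) := by
          rw [Int.odd_iff, Int.abs_eq_natAbs, Int.abs_eq_natAbs]; omega
        have hdvd1 := hf (-((n : ℤ) + 1)) t hs1' hs2' ht1 ht2 habs hodd
        have hws := w_sub (-((n : ℤ) + 1)) t k (by omega)
        have hL1 : (-va + MvPolynomial.C (k : ℚ) * vd) ∣ f (-((n : ℤ) + 1)) - f t := by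
          refine dvd_trans ?_ hdvd1
          rw [hws]
          exact dvd_mul_left _ _
        have hL2 : (-va + MvPolynomial.C (k : ℚ) * vd) ∣ S (-((n : ℤ) + 1)) - S t := by
          rw [hS]
          simp only
          rw [← Finset.sum_sub_distrib]
          apply Finset.dvd_sum
          intro q hq
          have hq1 : 1 ≤ q := (Finset.mem_Icc.mp hq).1
          have hedgeP := edgeP (m : ℤ) q hq1 (-((n : ℤ) + 1)) t k (by omega) hs1' hs2' ht1 ht2
          have hedgeM := edgeM (m : ℤ) q hq1 (-((n : ℤ) + 1)) t k (by omega) hs1' hs2' ht1 ht2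
          have hdP : (-va + MvPolynomial.C (k : ℚ) * vd) ∣ (xiP m q (-((n : ℤ) + 1)) - xiP m q t) :=
            dvd_Lneg_of_Ek k _ (by rw [map_sub, hedgeP, sub_self])
          have hdM : (-va + MvPolynomial.C (k : ℚ) * vd) ∣ (xiM m q (-((n : ℤ) + 1)) - xiM m q t) :=
            dvd_Lneg_of_Ek k _ (by rw [map_sub, hedgeM, sub_self])
          have hre : (h1 q * xiP m q (-((n : ℤ) + 1)) + h2 q * xiM m q (-((n : ℤ) + 1)))
              - (h1 q * xiP m q t + h2 q * xiM m q t)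
              = h1 q * (xiP m q (-((n : ℤ) + 1)) - xiP m q t)
                + h2 q * (xiM m q (-((n : ℤ) + 1)) - xiM m q t) := by ring
          rw [hre]
          exact dvd_add (Dvd.dvd.mul_left hdP _) (Dvd.dvd.mul_left hdM _)
        have hftS : f t = f 0 + S t := heq t (by omega) (by omega)
        have hre2 : f (-((n : ℤ) + 1)) - f 0 - S (-((n : ℤ) + 1))
            = (f (-((n : ℤ) + 1)) - f t) - (S (-((n : ℤ) + 1)) - S t) := by
          rw [hftS]; ring
        have hLfull : (-va + MvPolynomial.C (k : ℚ) * vd) ∣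
            f (-((n : ℤ) + 1)) - f 0 - S (-((n : ℤ) + 1)) := by
          rw [hre2]; exact dvd_sub hL1 hL2
        have hconv : (va + MvPolynomial.C (j : ℚ) * vd) = -(-va + MvPolynomial.C (k : ℚ) * vd) := by
          rw [hkdef]
          push_cast
          rw [map_neg]
          ring
        rw [hconv]
        exact neg_dvd.mpr hLfull
      obtain ⟨c2, hc2⟩ := hdvdM
      refine ⟨Function.update h1 (n + 1) c1, Function.update h2 (n + 1) c2, ?_, ?_⟩
      · intro q hq
        constructor
        · rw [Function.update_of_ne (by omega)]; exact (hsupp q (by omega)).1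
        · rw [Function.update_of_ne (by omega)]; exact (hsupp q (by omega)).2
      · intro t htl htr
        have hz1 : h1 (n + 1) = 0 := (hsupp (n + 1) (by omega)).1
        have hz2 : h2 (n + 1) = 0 := (hsupp (n + 1) (by omega)).2
        have hsum : ∀ u : ℤ,
            (∑ q ∈ Finset.Icc 1 m, (Function.update h1 (n + 1) c1 q * xiP m q u
              + Function.update h2 (n + 1) c2 q * xiM m q u))
            = S u + (c1 * xiP m (n + 1) u + c2 * xiM m (n + 1) u) := by
          intro u
          have hdiff : ∑ q ∈ Finset.Icc 1 m,
              ((Function.update h1 (n + 1) c1 q * xiP m q u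
                + Function.update h2 (n + 1) c2 q * xiM m q u)
               - (h1 q * xiP m q u + h2 q * xiM m q u))
              = (c1 - h1 (n + 1)) * xiP m (n + 1) u + (c2 - h2 (n + 1)) * xiM m (n + 1) u := by
            rw [Finset.sum_eq_single (n + 1)]
            · rw [Function.update_self, Function.update_self]; ring
            · intro q _ hne
              rw [Function.update_of_ne hne, Function.update_of_ne hne]; ring
            · intro habs
              exact absurd (Finset.mem_Icc.mpr ⟨by omega, by omega⟩) habs
          rw [Finset.sum_sub_distrib] at hdiff
          rw [hz1, hz2] at hdiff
          have : S u = ∑ q ∈ Finset.Icc 1 m, (h1 q * xiP m q u + h2 q * xiM m q u) := rfl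
          rw [this]
          linear_combination hdiff
        rcases le_or_gt t (n : ℤ) with htle | htgt
        · rcases le_or_gt (-(n : ℤ)) t with htge | htlt
          · -- old region
            rw [hsum t]
            rw [xiP_mid m (n + 1) t (by push_cast; omega) (by push_cast; omega),
                xiM_mid m (n + 1) t (by push_cast; omega) (by push_cast; omega)]
            rw [heq t htge htle]
            ring
          · -- t = -(n+1)
            have : t = -((n : ℤ) + 1) := by omega
            subst this
            rw [hsum]
            have e1 : xiP (m : ℤ) (n + 1) (-((n : ℤ) + 1)) = 0 := by
              rw [xiP, if_neg (by push_cast; omega), if_neg (by push_cast; omega)]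
            have e2 : xiM (m : ℤ) (n + 1) (-((n : ℤ) + 1)) = Ppos 1 ((n : ℤ) + 1) := by
              have hc : -((n : ℤ) + 1) = -(((n + 1 : ℕ)) : ℤ) := by push_cast; ring
              rw [hc, xiM_nadir (m : ℤ) (n + 1) (by omega) (by push_cast; omega)]
              congr 1 <;> push_cast <;> ring
            rw [e1, e2]
            linear_combination hc2
        · -- t = n+1
          have : t = (n : ℤ) + 1 := by omega
          subst this
          rw [hsum]
          have e1 : xiM (m : ℤ) (n + 1) ((n : ℤ) + 1) = 0 := by
            rw [xiM, if_neg (by push_cast; omega), if_neg (by push_cast; omega)]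
          have e2 : xiP (m : ℤ) (n + 1) ((n : ℤ) + 1) = Pneg 0 (n : ℤ) := by
            have hc : ((n : ℤ) + 1) = (((n + 1 : ℕ)) : ℤ) := by push_cast; ring
            rw [hc, xiP_apex (m : ℤ) (n + 1) (by omega) (by push_cast; omega)]
            congr 1 <;> push_cast <;> ring
          rw [e1, e2]
          linear_combination hc1
  obtain ⟨h1, h2, _, heq⟩ := key m le_rfl
  exact ⟨f 0, h1, h2, rfl, fun t htl htr => heq t htl htr⟩
end
end

section
/- The structure constants of the Knutson–Tao basis are integral: for any two members ξ_a and ξ_b of the family {ξ⁰} ∪ {ξ⁺_q : 1 ≤ q ≤ m} ∪ {ξ⁻_q : 1 ≤ q ≤ m}, there exist polynomials h₀ and h_{q,1}, h_{q,2} (1 ≤ q ≤ m) lying in the subring ℤ[α,δ] ⊆ R of polynomials with integer coefficients such that ξ_a(t)·ξ_b(t) = h₀·ξ⁰(t) + Σ_{q=1}^{m} ( h_{q,1}·ξ⁺_q(t) + h_{q,2}·ξ⁻_q(t) ) for all t ∈ V_m. -/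
noncomputable section

open Finset MvPolynomial

def Pr (q : ℕ) (x : ℤ) : ℚ := ∏ i ∈ Finset.range q, ((x : ℚ) + (i : ℕ))

lemma prod_Icc_eq_range {M : Type*} [CommMonoid M] (a : ℤ) (q : ℕ) (g : ℤ → M) :
    ∏ k ∈ Finset.Icc a (a + q - 1), g k = ∏ i ∈ Finset.range q, g (a + i) := by
  have himg : Finset.Icc a (a + q - 1) = (Finset.range q).image (fun i : ℕ => a + i) := by
    ext k
    simp only [Finset.mem_Icc, Finset.mem_image, Finset.mem_range]
    constructor
    · intro hk
      exact ⟨(k - a).toNat, by omega, by omega⟩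
    · rintro ⟨i, hi, rfl⟩
      omega
  rw [himg, Finset.prod_image]
  intro i _ j _ hij
  have hij' : a + (i:ℤ) = a + j := hij
  omega

/-- substitution α ↦ c·δ -/
def sg (c : ℚ) : Rpoly →ₐ[ℚ] Rpoly :=
  aeval (fun i => if i = 0 then MvPolynomial.C c * X 1 else X 1)

lemma sg_C (c a : ℚ) : sg c (MvPolynomial.C a) = MvPolynomial.C a := by simp [sg]
lemma sg_va (c : ℚ) : sg c va = MvPolynomial.C c * X 1 := by simp [sg, va]
lemma sg_vd (c : ℚ) : sg c vd = X 1 := by simp [sg, vd]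

lemma dvd_sub_sg (c : ℚ) (f : Rpoly) : (va - MvPolynomial.C c * vd) ∣ (f - sg c f) := by
  induction f using MvPolynomial.induction_on with
  | C a => rw [sg_C]; simp
  | add p q hp hq =>
      have : p + q - sg c (p + q) = (p - sg c p) + (q - sg c q) := by
        rw [map_add]; ring
      rw [this]; exact dvd_add hp hq
  | mul_X p i hp =>
      have hX : p * X i - sg c (p * X i)
          = (p - sg c p) * X i + sg c p * (X i - sg c (X i)) := by
        rw [map_mul]; ring
      rw [hX]
      apply dvd_add (Dvd.dvd.mul_right hp _)
      apply Dvd.dvd.mul_left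
      fin_cases i
      · show va - MvPolynomial.C c * vd ∣ X (0 : Fin 2) - sg c (X (0 : Fin 2))
        have h0 : sg c (X (0 : Fin 2)) = MvPolynomial.C c * X 1 := sg_va c
        rw [h0]; exact dvd_refl _
      · show va - MvPolynomial.C c * vd ∣ X (1 : Fin 2) - sg c (X (1 : Fin 2))
        have h1 : sg c (X (1 : Fin 2)) = X 1 := sg_vd c
        rw [h1]; simp
lemma sg_Pneg (c a : ℤ) (q : ℕ) :
    sg (c : ℚ) (Pneg a (a + q - 1)) = MvPolynomial.C (Pr q (a - c)) * X 1 ^ q := by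
  unfold Pneg
  rw [map_prod, prod_Icc_eq_range]
  have hfac : ∀ i : ℕ, sg (c:ℚ) (-va + MvPolynomial.C ((a + i : ℤ) : ℚ) * vd)
      = MvPolynomial.C (((a - c : ℤ) : ℚ) + i) * X 1 := by
    intro i
    rw [map_add, map_neg, sg_va, map_mul, sg_C, sg_vd,
      show (((a - c : ℤ) : ℚ) + i) = ((a + i : ℤ) : ℚ) - c by push_cast; ring, map_sub]
    ring
  rw [Finset.prod_congr rfl (fun i _ => hfac i)]
  rw [Finset.prod_mul_distrib, Finset.prod_const, Finset.card_range, ← map_prod]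
  unfold Pr
  push_cast
  ring
lemma sg_Ppos (c a : ℤ) (q : ℕ) :
    sg (c : ℚ) (Ppos a (a + q - 1)) = MvPolynomial.C (Pr q (a + c)) * X 1 ^ q := by
  unfold Ppos
  rw [map_prod, prod_Icc_eq_range]
  have hfac : ∀ i : ℕ, sg (c:ℚ) (va + MvPolynomial.C ((a + i : ℤ) : ℚ) * vd)
      = MvPolynomial.C (((a + c : ℤ) : ℚ) + i) * X 1 := by
    intro i
    rw [map_add, sg_va, map_mul, sg_C, sg_vd,
      show (((a + c : ℤ) : ℚ) + i) = ((a + i : ℤ) : ℚ) + c by push_cast; ring, map_add]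
    ring
  rw [Finset.prod_congr rfl (fun i _ => hfac i)]
  rw [Finset.prod_mul_distrib, Finset.prod_const, Finset.card_range, ← map_prod]
  unfold Pr
  push_cast
  ring

lemma ceil_eq (n u : ℤ) (h : n = 2*u ∨ n = 2*u - 1) : ⌈(n:ℚ)/2⌉ = u := by
  rcases h with h | h <;>
  · rw [Int.ceil_eq_iff]
    constructor <;> · push_cast [h]; linarith

lemma xiP_r1 (m : ℤ) (q : ℕ) (t u : ℤ) (hu : t - q = 2*(u-1) ∨ t - q = 2*u - 1)
    (h1 : (q:ℤ) ≤ t) (h2 : t ≤ m) :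
    xiP m q t = MvPolynomial.C (B (u + q - 1) q) * Pneg (u - 1) ((u - 1) + q - 1) := by
  unfold xiP
  rw [if_pos ⟨h1, h2⟩]
  have hcast : ((t:ℚ) - (q:ℚ) + 1) = ((t - q + 1 : ℤ) : ℚ) := by push_cast; ring
  have hc : ⌈((t:ℚ) - (q:ℚ) + 1)/2⌉ = u := by
    rw [hcast, ceil_eq _ u (by omega)]
  rw [hc, show u + (q:ℤ) - 2 = (u - 1) + q - 1 by ring]

lemma xiP_r2 (m : ℤ) (q : ℕ) (t v : ℤ) (hv : -t - q = 2*v - 1 ∨ -t - q = 2*v)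
    (h1 : -m ≤ t) (h2 : t ≤ -((q:ℤ) + 1)) :
    xiP m q t = MvPolynomial.C (B (v + q - 1) q) * Ppos (v + 1) ((v + 1) + q - 1) := by
  unfold xiP
  rw [if_neg (by omega), if_pos ⟨h1, h2⟩]
  have hcast : (-(t:ℚ) - (q:ℚ)) = ((-t - q : ℤ) : ℚ) := by push_cast; ring
  have hc : ⌈(-(t:ℚ) - (q:ℚ))/2⌉ = v := by
    rw [hcast, ceil_eq _ v (by omega)]
  rw [hc, show v + (q:ℤ) = (v + 1) + q - 1 by ring]

lemma xiP_gap (m : ℤ) (q : ℕ) (t : ℤ) (h1 : -(q:ℤ) ≤ t) (h2 : t ≤ (q:ℤ) - 1) :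
    xiP m q t = 0 := by
  unfold xiP
  rw [if_neg (by omega), if_neg (by omega)]

lemma xiM_r1 (m : ℤ) (q : ℕ) (t u : ℤ) (hu : t - q = 2*u - 1 ∨ t - q = 2*u)
    (h1 : (q:ℤ) + 1 ≤ t) (h2 : t ≤ m) :
    xiM m q t = MvPolynomial.C (B (u + q - 1) q) * Pneg u (u + q - 1) := by
  unfold xiM
  rw [if_pos ⟨h1, h2⟩]
  have hcast : ((t:ℚ) - (q:ℚ)) = ((t - q : ℤ) : ℚ) := by push_cast; ring
  have hc : ⌈((t:ℚ) - (q:ℚ))/2⌉ = u := by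
    rw [hcast, ceil_eq _ u (by omega)]
  rw [hc]

lemma xiM_r2 (m : ℤ) (q : ℕ) (t v : ℤ) (hv : -t - q = 2*v - 2 ∨ -t - q = 2*v - 1)
    (h1 : -m ≤ t) (h2 : t ≤ -(q:ℤ)) :
    xiM m q t = MvPolynomial.C (B (v + q - 1) q) * Ppos v (v + q - 1) := by
  unfold xiM
  rw [if_neg (by omega), if_pos ⟨h1, h2⟩]
  have hcast : (-(t:ℚ) - (q:ℚ) + 1) = ((-t - q + 1 : ℤ) : ℚ) := by push_cast; ring
  have hc : ⌈(-(t:ℚ) - (q:ℚ) + 1)/2⌉ = v := by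
    rw [hcast, ceil_eq _ v (by omega)]
  rw [hc]

lemma xiM_gap (m : ℤ) (q : ℕ) (t : ℤ) (h1 : -(q:ℤ) + 1 ≤ t) (h2 : t ≤ (q:ℤ)) :
    xiM m q t = 0 := by
  unfold xiM
  rw [if_neg (by omega), if_neg (by omega)]

lemma Pr_reflect (q : ℕ) (x : ℤ) : Pr q (1 - q - x) = (-1)^q * Pr q x := by
  unfold Pr
  rw [← Finset.prod_range_reflect (fun i => ((x:ℚ) + i)) q,
    show ((-1:ℚ))^q = ∏ _i ∈ Finset.range q, (-1:ℚ) by rw [Finset.prod_const, Finset.card_range],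
    ← Finset.prod_mul_distrib]
  apply Finset.prod_congr rfl
  intro i hi
  rw [Finset.mem_range] at hi
  have h2 : ((q - 1 - i : ℕ) : ℚ) = (q : ℚ) - 1 - i := by
    have h3 : ((q - 1 - i : ℕ) : ℤ) = (q:ℤ) - 1 - i := by omega
    exact_mod_cast congrArg (fun z : ℤ => (z : ℚ)) h3
  rw [h2]; push_cast; ring

lemma Pr_zero (q : ℕ) (x : ℤ) (h1 : 1 - q ≤ x) (h2 : x ≤ 0) : Pr q x = 0 := by
  unfold Pr
  apply Finset.prod_eq_zero (i := (-x).toNat)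
  · rw [Finset.mem_range]; omega
  · have h4 : (((-x).toNat : ℕ) : ℤ) = -x := Int.toNat_of_nonneg (by omega)
    have h5 : (((-x).toNat : ℕ) : ℚ) = -(x:ℚ) := by exact_mod_cast congrArg (fun z : ℤ => (z:ℚ)) h4
    rw [h5]; ring

lemma fact_mul_B (q : ℕ) (u : ℤ) (hu : 1 ≤ u) : (q.factorial : ℚ) * B (u + q - 1) q = Pr q u := by
  obtain ⟨n, rfl⟩ : ∃ n : ℕ, u = (n:ℤ) := ⟨u.toNat, by omega⟩
  have h1 : ((n:ℤ) + q - 1).toNat = n + q - 1 := by omega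
  unfold B Pr
  rw [h1]
  have h23 : q.factorial * (n + q - 1).choose q = ∏ i ∈ Finset.range q, (n + i) := by
    rw [← Nat.descFactorial_eq_factorial_mul_choose, Nat.descFactorial_eq_prod_range,
      ← Finset.prod_range_reflect (fun i => n + i) q]
    apply Finset.prod_congr rfl
    intro i hi
    rw [Finset.mem_range] at hi
    omega
  have h6 := congrArg (fun k : ℕ => (k : ℚ)) h23
  push_cast at h6 ⊢
  exact h6

lemma keyQ (q : ℕ) (u u' : ℤ) (hu : 1 ≤ u) (hu' : 1 ≤ u') :
    B (u + q - 1) q * Pr q u' = B (u' + q - 1) q * Pr q u := by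
  have hq : (q.factorial : ℚ) ≠ 0 := by exact_mod_cast q.factorial_ne_zero
  apply mul_left_cancel₀ hq
  rw [← mul_assoc, ← mul_assoc, fact_mul_B q u hu, fact_mul_B q u' hu', mul_comm]

lemma sg_xiP_r1 (m : ℤ) (q : ℕ) (c t u : ℤ) (hu : t - q = 2*(u-1) ∨ t - q = 2*u - 1)
    (h1 : (q:ℤ) ≤ t) (h2 : t ≤ m) :
    sg (c:ℚ) (xiP m q t) = MvPolynomial.C (B (u + q - 1) q * Pr q ((u - 1) - c)) * X 1 ^ q := by
  rw [xiP_r1 m q t u hu h1 h2, map_mul, sg_C, sg_Pneg c (u-1) q, map_mul, mul_assoc]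

lemma sg_xiP_r2 (m : ℤ) (q : ℕ) (c t v : ℤ) (hv : -t - q = 2*v - 1 ∨ -t - q = 2*v)
    (h1 : -m ≤ t) (h2 : t ≤ -((q:ℤ) + 1)) :
    sg (c:ℚ) (xiP m q t) = MvPolynomial.C (B (v + q - 1) q * Pr q ((v + 1) + c)) * X 1 ^ q := by
  rw [xiP_r2 m q t v hv h1 h2, map_mul, sg_C, sg_Ppos c (v+1) q, map_mul, mul_assoc]

lemma sg_xiM_r1 (m : ℤ) (q : ℕ) (c t u : ℤ) (hu : t - q = 2*u - 1 ∨ t - q = 2*u)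
    (h1 : (q:ℤ) + 1 ≤ t) (h2 : t ≤ m) :
    sg (c:ℚ) (xiM m q t) = MvPolynomial.C (B (u + q - 1) q * Pr q (u - c)) * X 1 ^ q := by
  have := sg_Pneg c u q
  rw [xiM_r1 m q t u hu h1 h2, map_mul, sg_C, this, map_mul, mul_assoc]

lemma sg_xiM_r2 (m : ℤ) (q : ℕ) (c t v : ℤ) (hv : -t - q = 2*v - 2 ∨ -t - q = 2*v - 1)
    (h1 : -m ≤ t) (h2 : t ≤ -(q:ℤ)) :
    sg (c:ℚ) (xiM m q t) = MvPolynomial.C (B (v + q - 1) q * Pr q (v + c)) * X 1 ^ q := by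
  have := sg_Ppos c v q
  rw [xiM_r2 m q t v hv h1 h2, map_mul, sg_C, this, map_mul, mul_assoc]

lemma sg_eq_xiP (m : ℤ) (q : ℕ) (hq : 1 ≤ q) (t t' c : ℤ)
    (ht1 : -m ≤ t) (ht2 : t ≤ m) (ht1' : -m ≤ t') (ht2' : t' ≤ m)
    (hsum : t + t' = 2*c + 1) :
    sg (c:ℚ) (xiP m q t) = sg (c:ℚ) (xiP m q t') := by
  have hq' : (1:ℤ) ≤ (q:ℤ) := by exact_mod_cast hq
  wlog hle : t' ≤ t generalizing t t' with H
  · exact (H t' t ht1' ht2' ht1 ht2 (by omega) (by omega)).symm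
  have hparP : ∀ s : ℤ, ∃ u : ℤ, s = 2*(u-1) ∨ s = 2*u - 1 := by
    intro s
    rcases Int.even_or_odd s with ⟨r, hr⟩ | ⟨r, hr⟩
    exacts [⟨r+1, Or.inl (by omega)⟩, ⟨r+1, Or.inr (by omega)⟩]
  have hparN : ∀ s : ℤ, ∃ v : ℤ, s = 2*v - 1 ∨ s = 2*v := by
    intro s
    rcases Int.even_or_odd s with ⟨r, hr⟩ | ⟨r, hr⟩
    exacts [⟨r, Or.inr (by omega)⟩, ⟨r+1, Or.inl (by omega)⟩]
  rcases (show ((q:ℤ) ≤ t ∧ t ≤ m) ∨ (-(q:ℤ) ≤ t ∧ t ≤ (q:ℤ)-1) ∨ (-m ≤ t ∧ t ≤ -(q:ℤ)-1)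
      from by omega) with ⟨a1,a2⟩|⟨a1,a2⟩|⟨a1,a2⟩ <;>
    rcases (show ((q:ℤ) ≤ t' ∧ t' ≤ m) ∨ (-(q:ℤ) ≤ t' ∧ t' ≤ (q:ℤ)-1) ∨ (-m ≤ t' ∧ t' ≤ -(q:ℤ)-1)
      from by omega) with ⟨b1,b2⟩|⟨b1,b2⟩|⟨b1,b2⟩
  -- (R1,R1)
  · obtain ⟨u, hu⟩ := hparP (t - q)
    obtain ⟨u', hu'⟩ := hparP (t' - q)
    rw [sg_xiP_r1 m q c t u hu a1 a2, sg_xiP_r1 m q c t' u' hu' b1 b2]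
    rcases hu with hu | hu <;> rcases hu' with hu' | hu'
    · omega
    · have e1 : (u - 1) - c = 1 - q - u' := by omega
      have e2 : (u' - 1) - c = 1 - q - u := by omega
      rw [e1, e2, Pr_reflect, Pr_reflect]
      have hk := keyQ q u u' (by omega) (by omega)
      congr 1
      rw [MvPolynomial.C_inj]
      linear_combination ((-1:ℚ)^q) * hk
    · have e1 : (u - 1) - c = 1 - q - u' := by omega
      have e2 : (u' - 1) - c = 1 - q - u := by omega
      rw [e1, e2, Pr_reflect, Pr_reflect]
      have hk := keyQ q u u' (by omega) (by omega)
      congr 1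
      rw [MvPolynomial.C_inj]
      linear_combination ((-1:ℚ)^q) * hk
    · omega
  -- (R1,G)
  · obtain ⟨u, hu⟩ := hparP (t - q)
    rw [sg_xiP_r1 m q c t u hu a1 a2, xiP_gap m q t' b1 b2, map_zero]
    have hz : Pr q ((u - 1) - c) = 0 := Pr_zero q _ (by omega) (by omega)
    rw [hz, mul_zero, map_zero, zero_mul]
  -- (R1,R2)
  · obtain ⟨u, hu⟩ := hparP (t - q)
    obtain ⟨v, hv⟩ := hparN (-t' - q)
    rw [sg_xiP_r1 m q c t u hu a1 a2, sg_xiP_r2 m q c t' v hv b1 (by omega)]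
    have e1 : (u - 1) - c = v := by omega
    have e2 : (v + 1) + c = u := by omega
    rw [e1, e2]
    congr 1
    rw [MvPolynomial.C_inj]
    exact keyQ q u v (by omega) (by omega)
  -- (G,R1) impossible
  · omega
  -- (G,G)
  · rw [xiP_gap m q t a1 a2, xiP_gap m q t' b1 b2]
  -- (G,R2)
  · obtain ⟨v, hv⟩ := hparN (-t' - q)
    rw [xiP_gap m q t a1 a2, sg_xiP_r2 m q c t' v hv b1 (by omega), map_zero]
    have hz : Pr q ((v + 1) + c) = 0 := Pr_zero q _ (by omega) (by omega)
    rw [hz, mul_zero, map_zero, zero_mul]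
  -- (R2,R1) impossible
  · omega
  -- (R2,G) impossible
  · omega
  -- (R2,R2)
  · obtain ⟨v, hv⟩ := hparN (-t - q)
    obtain ⟨v', hv'⟩ := hparN (-t' - q)
    rw [sg_xiP_r2 m q c t v hv a1 (by omega), sg_xiP_r2 m q c t' v' hv' b1 (by omega)]
    rcases hv with hv | hv <;> rcases hv' with hv' | hv'
    · omega
    · have e1 : (v + 1) + c = 1 - q - v' := by omega
      have e2 : (v' + 1) + c = 1 - q - v := by omega
      rw [e1, e2, Pr_reflect, Pr_reflect]
      have hk := keyQ q v v' (by omega) (by omega)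
      congr 1
      rw [MvPolynomial.C_inj]
      linear_combination ((-1:ℚ)^q) * hk
    · have e1 : (v + 1) + c = 1 - q - v' := by omega
      have e2 : (v' + 1) + c = 1 - q - v := by omega
      rw [e1, e2, Pr_reflect, Pr_reflect]
      have hk := keyQ q v v' (by omega) (by omega)
      congr 1
      rw [MvPolynomial.C_inj]
      linear_combination ((-1:ℚ)^q) * hk
    · omega

lemma sg_eq_xiM (m : ℤ) (q : ℕ) (hq : 1 ≤ q) (t t' c : ℤ)
    (ht1 : -m ≤ t) (ht2 : t ≤ m) (ht1' : -m ≤ t') (ht2' : t' ≤ m)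
    (hsum : t + t' = 2*c + 1) :
    sg (c:ℚ) (xiM m q t) = sg (c:ℚ) (xiM m q t') := by
  have hq' : (1:ℤ) ≤ (q:ℤ) := by exact_mod_cast hq
  wlog hle : t' ≤ t generalizing t t' with H
  · exact (H t' t ht1' ht2' ht1 ht2 (by omega) (by omega)).symm
  have hparN : ∀ s : ℤ, ∃ v : ℤ, s = 2*v - 1 ∨ s = 2*v := by
    intro s
    rcases Int.even_or_odd s with ⟨r, hr⟩ | ⟨r, hr⟩
    exacts [⟨r, Or.inr (by omega)⟩, ⟨r+1, Or.inl (by omega)⟩]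
  have hparM : ∀ s : ℤ, ∃ v : ℤ, s = 2*v - 2 ∨ s = 2*v - 1 := by
    intro s
    rcases Int.even_or_odd s with ⟨r, hr⟩ | ⟨r, hr⟩
    exacts [⟨r+1, Or.inl (by omega)⟩, ⟨r+1, Or.inr (by omega)⟩]
  rcases (show ((q:ℤ)+1 ≤ t ∧ t ≤ m) ∨ (-(q:ℤ)+1 ≤ t ∧ t ≤ (q:ℤ)) ∨ (-m ≤ t ∧ t ≤ -(q:ℤ))
      from by omega) with ⟨a1,a2⟩|⟨a1,a2⟩|⟨a1,a2⟩ <;>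
    rcases (show ((q:ℤ)+1 ≤ t' ∧ t' ≤ m) ∨ (-(q:ℤ)+1 ≤ t' ∧ t' ≤ (q:ℤ)) ∨ (-m ≤ t' ∧ t' ≤ -(q:ℤ))
      from by omega) with ⟨b1,b2⟩|⟨b1,b2⟩|⟨b1,b2⟩
  -- (R1,R1)
  · obtain ⟨u, hu⟩ := hparN (t - q)
    obtain ⟨u', hu'⟩ := hparN (t' - q)
    rw [sg_xiM_r1 m q c t u hu a1 a2, sg_xiM_r1 m q c t' u' hu' b1 b2]
    rcases hu with hu | hu <;> rcases hu' with hu' | hu'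
    · omega
    · have e1 : u - c = 1 - q - u' := by omega
      have e2 : u' - c = 1 - q - u := by omega
      rw [e1, e2, Pr_reflect, Pr_reflect]
      have hk := keyQ q u u' (by omega) (by omega)
      congr 1
      rw [MvPolynomial.C_inj]
      linear_combination ((-1:ℚ)^q) * hk
    · have e1 : u - c = 1 - q - u' := by omega
      have e2 : u' - c = 1 - q - u := by omega
      rw [e1, e2, Pr_reflect, Pr_reflect]
      have hk := keyQ q u u' (by omega) (by omega)
      congr 1
      rw [MvPolynomial.C_inj]
      linear_combination ((-1:ℚ)^q) * hk
    · omega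
  -- (R1,G)
  · obtain ⟨u, hu⟩ := hparN (t - q)
    rw [sg_xiM_r1 m q c t u hu a1 a2, xiM_gap m q t' b1 b2, map_zero]
    have hz : Pr q (u - c) = 0 := Pr_zero q _ (by omega) (by omega)
    rw [hz, mul_zero, map_zero, zero_mul]
  -- (R1,R2)
  · obtain ⟨u, hu⟩ := hparN (t - q)
    obtain ⟨v, hv⟩ := hparM (-t' - q)
    rw [sg_xiM_r1 m q c t u hu a1 a2, sg_xiM_r2 m q c t' v hv b1 b2]
    have e1 : u - c = v := by omega
    have e2 : v + c = u := by omega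
    rw [e1, e2]
    congr 1
    rw [MvPolynomial.C_inj]
    exact keyQ q u v (by omega) (by omega)
  -- (G,R1) impossible
  · omega
  -- (G,G)
  · rw [xiM_gap m q t a1 a2, xiM_gap m q t' b1 b2]
  -- (G,R2)
  · obtain ⟨v, hv⟩ := hparM (-t' - q)
    rw [xiM_gap m q t a1 a2, sg_xiM_r2 m q c t' v hv b1 b2, map_zero]
    have hz : Pr q (v + c) = 0 := Pr_zero q _ (by omega) (by omega)
    rw [hz, mul_zero, map_zero, zero_mul]
  -- (R2,R1) impossible
  · omega
  -- (R2,G) impossible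
  · omega
  -- (R2,R2)
  · obtain ⟨v, hv⟩ := hparM (-t - q)
    obtain ⟨v', hv'⟩ := hparM (-t' - q)
    rw [sg_xiM_r2 m q c t v hv a1 a2, sg_xiM_r2 m q c t' v' hv' b1 b2]
    rcases hv with hv | hv <;> rcases hv' with hv' | hv'
    · omega
    · have e1 : v + c = 1 - q - v' := by omega
      have e2 : v' + c = 1 - q - v := by omega
      rw [e1, e2, Pr_reflect, Pr_reflect]
      have hk := keyQ q v v' (by omega) (by omega)
      congr 1
      rw [MvPolynomial.C_inj]
      linear_combination ((-1:ℚ)^q) * hk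
    · have e1 : v + c = 1 - q - v' := by omega
      have e2 : v' + c = 1 - q - v := by omega
      rw [e1, e2, Pr_reflect, Pr_reflect]
      have hk := keyQ q v v' (by omega) (by omega)
      congr 1
      rw [MvPolynomial.C_inj]
      linear_combination ((-1:ℚ)^q) * hk
    · omega

/-- the subring ℤ[α,δ] -/
def Zr : Set Rpoly := Set.range (MvPolynomial.map (σ := Fin 2) (Int.castRingHom ℚ))

lemma prime_lin (c : ℤ) : Prime (va - MvPolynomial.C (c:ℚ) * vd) := by
  rw [← MulEquiv.prime_iff (MvPolynomial.finSuccEquiv ℚ 1)]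
  show Prime ((MvPolynomial.finSuccEquiv ℚ 1) (va - MvPolynomial.C (c:ℚ) * vd))
  have himg : (MvPolynomial.finSuccEquiv ℚ 1) (va - MvPolynomial.C (c:ℚ) * vd)
      = Polynomial.X - Polynomial.C (MvPolynomial.C (c:ℚ) * MvPolynomial.X 0) := by
    rw [map_sub, map_mul]
    rw [show va = MvPolynomial.X (0 : Fin 2) from rfl,
      show vd = MvPolynomial.X (1 : Fin 2) from rfl]
    rw [MvPolynomial.finSuccEquiv_X_zero]
    rw [show (1 : Fin 2) = (0 : Fin 1).succ from rfl, MvPolynomial.finSuccEquiv_X_succ]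
    simp
  rw [himg]
  exact Polynomial.prime_X_sub_C _

lemma lin_assoc (c c' : ℤ) (h : (va - MvPolynomial.C (c:ℚ) * vd) ∣ (va - MvPolynomial.C (c':ℚ) * vd)) :
    c = c' := by
  obtain ⟨h', hh⟩ := h
  have h2 := congrArg (MvPolynomial.eval (fun i : Fin 2 => if i = 0 then (c:ℚ) else 1)) hh
  simp [va, vd] at h2
  exact_mod_cast sub_eq_zero.mp h2

lemma prod_lin_dvd (s : Finset ℤ) (d : ℤ → ℤ) (hinj : ∀ k ∈ s, ∀ k' ∈ s, d k = d k' → k = k')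
    (g : Rpoly) (hdvd : ∀ k ∈ s, (va - MvPolynomial.C (d k : ℚ) * vd) ∣ g) :
    (∏ k ∈ s, (va - MvPolynomial.C (d k : ℚ) * vd)) ∣ g := by
  induction s using Finset.induction with
  | empty => simpa using one_dvd g
  | @insert a s ha ih =>
      have hP : (∏ k ∈ s, (va - MvPolynomial.C (d k : ℚ) * vd)) ∣ g := by
        apply ih
        · intro k hk k' hk' h
          exact hinj k (Finset.mem_insert_of_mem hk) k' (Finset.mem_insert_of_mem hk') h
        · intro k hk
          exact hdvd k (Finset.mem_insert_of_mem hk)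
      obtain ⟨h, hh⟩ := hP
      have hp : Prime (va - MvPolynomial.C (d a : ℚ) * vd) := prime_lin (d a)
      have hpg : (va - MvPolynomial.C (d a : ℚ) * vd) ∣
          (∏ k ∈ s, (va - MvPolynomial.C (d k : ℚ) * vd)) * h := hh ▸ hdvd a (Finset.mem_insert_self a s)
      rcases hp.dvd_mul.mp hpg with hc | hc
      · exfalso
        obtain ⟨k, hk, hdk⟩ := (hp.dvd_finset_prod_iff _).mp hc
        have : d a = d k := lin_assoc _ _ hdk
        exact ha ((hinj a (Finset.mem_insert_self a s) k (Finset.mem_insert_of_mem hk) this) ▸ hk)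
      · obtain ⟨h', rfl⟩ := hc
        rw [Finset.prod_insert ha]
        exact ⟨h', by rw [hh]; ring⟩

/-- integral subring as RingHom.range -/
lemma finSucc_lin (c : ℚ) : (MvPolynomial.finSuccEquiv ℚ 1) (va - MvPolynomial.C c * vd)
    = Polynomial.X - Polynomial.C (MvPolynomial.C c * MvPolynomial.X 0) := by
  have hC : (MvPolynomial.finSuccEquiv ℚ 1) (MvPolynomial.C c) = Polynomial.C (MvPolynomial.C c) := by
    simp [MvPolynomial.finSuccEquiv_apply]
  rw [map_sub, map_mul, hC]
  rw [show va = MvPolynomial.X (0 : Fin 2) from rfl,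
    show vd = MvPolynomial.X (1 : Fin 2) from rfl]
  rw [MvPolynomial.finSuccEquiv_X_zero]
  rw [show (1 : Fin 2) = (0 : Fin 1).succ from rfl, MvPolynomial.finSuccEquiv_X_succ]
  simp

lemma finSucc_comm (gZ : MvPolynomial (Fin 2) ℤ) :
    (MvPolynomial.finSuccEquiv ℚ 1) (MvPolynomial.map (Int.castRingHom ℚ) gZ)
      = Polynomial.map (MvPolynomial.map (Int.castRingHom ℚ))
          ((MvPolynomial.finSuccEquiv ℤ 1) gZ) := by
  induction gZ using MvPolynomial.induction_on with
  | C a =>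
      simp [MvPolynomial.finSuccEquiv_apply]
  | add p q hp hq =>
      rw [map_add, map_add, hp, hq, map_add, Polynomial.map_add]
  | mul_X p i hp =>
      rw [map_mul, map_mul, hp, map_mul, Polynomial.map_mul]
      congr 1
      fin_cases i
      · rw [show ((⟨0, by omega⟩ : Fin 2)) = (0 : Fin 2) from rfl]
        rw [MvPolynomial.map_X, MvPolynomial.finSuccEquiv_X_zero,
          MvPolynomial.finSuccEquiv_X_zero, Polynomial.map_X]
      · rw [show ((⟨1, by omega⟩ : Fin 2)) = ((0 : Fin 1).succ : Fin 2) from rfl]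
        rw [MvPolynomial.map_X, MvPolynomial.finSuccEquiv_X_succ,
          MvPolynomial.finSuccEquiv_X_succ, Polynomial.map_C, MvPolynomial.map_X]

lemma gauss (s : Finset ℤ) (d : ℤ → ℤ) (g : Rpoly)
    (hg : g ∈ (MvPolynomial.map (σ := Fin 2) (Int.castRingHom ℚ)).range)
    (hdvd : (∏ k ∈ s, (va - MvPolynomial.C (d k : ℚ) * vd)) ∣ g) :
    ∃ h ∈ (MvPolynomial.map (σ := Fin 2) (Int.castRingHom ℚ)).range,
      g = (∏ k ∈ s, (va - MvPolynomial.C (d k : ℚ) * vd)) * h := by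
  obtain ⟨gZ, rfl⟩ := hg
  set μ : MvPolynomial (Fin 1) ℤ →+* MvPolynomial (Fin 1) ℚ :=
    MvPolynomial.map (Int.castRingHom ℚ) with hμ
  have hμinj : Function.Injective μ :=
    MvPolynomial.map_injective (Int.castRingHom ℚ) Int.cast_injective
  set DZ : Polynomial (MvPolynomial (Fin 1) ℤ) :=
    ∏ k ∈ s, (Polynomial.X - Polynomial.C (MvPolynomial.C (d k) * MvPolynomial.X 0)) with hDZ
  have hmonic : DZ.Monic :=
    Polynomial.monic_prod_of_monic _ _ (fun k _ => Polynomial.monic_X_sub_C _)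
  have hφD : (MvPolynomial.finSuccEquiv ℚ 1) (∏ k ∈ s, (va - MvPolynomial.C (d k : ℚ) * vd))
      = Polynomial.map μ DZ := by
    rw [map_prod, hDZ, Polynomial.map_prod]
    apply Finset.prod_congr rfl
    intro k _
    rw [finSucc_lin]
    simp [hμ]
  have hdvd2 : Polynomial.map μ DZ ∣ Polynomial.map μ ((MvPolynomial.finSuccEquiv ℤ 1) gZ) := by
    rw [← hφD, ← finSucc_comm]
    exact _root_.map_dvd _ hdvd
  have hdvd3 : DZ ∣ (MvPolynomial.finSuccEquiv ℤ 1) gZ :=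
    (Polynomial.map_dvd_map μ hμinj hmonic).mp hdvd2
  obtain ⟨hZ', hhZ'⟩ := hdvd3
  refine ⟨MvPolynomial.map (Int.castRingHom ℚ) ((MvPolynomial.finSuccEquiv ℤ 1).symm hZ'),
    ⟨_, rfl⟩, ?_⟩
  apply (MvPolynomial.finSuccEquiv ℚ 1).injective
  rw [map_mul, hφD, finSucc_comm, finSucc_comm, hhZ', Polynomial.map_mul,
    AlgEquiv.apply_symm_apply]

abbrev ZR := (MvPolynomial.map (σ := Fin 2) (Int.castRingHom ℚ)).range

lemma mem_C_int (k : ℤ) : MvPolynomial.C (k:ℚ) ∈ ZR := ⟨MvPolynomial.C k, by simp⟩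

lemma mem_va : va ∈ ZR := ⟨MvPolynomial.X 0, MvPolynomial.map_X _ _⟩
lemma mem_vd : vd ∈ ZR := ⟨MvPolynomial.X 1, MvPolynomial.map_X _ _⟩

lemma mem_B (n : ℤ) (q : ℕ) : MvPolynomial.C (B n q) ∈ ZR := by
  refine ⟨MvPolynomial.C ((n.toNat.choose q : ℕ) : ℤ), ?_⟩
  rw [MvPolynomial.map_C]
  unfold B
  push_cast
  rfl

lemma mem_Pneg (a b : ℤ) : Pneg a b ∈ ZR := by
  unfold Pneg
  apply Subring.prod_mem
  intro k _
  exact Subring.add_mem _ (Subring.neg_mem _ mem_va) (Subring.mul_mem _ (mem_C_int k) mem_vd)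

lemma mem_Ppos (a b : ℤ) : Ppos a b ∈ ZR := by
  unfold Ppos
  apply Subring.prod_mem
  intro k _
  exact Subring.add_mem _ mem_va (Subring.mul_mem _ (mem_C_int k) mem_vd)

lemma mem_xiP (m : ℤ) (q : ℕ) (t : ℤ) : xiP m q t ∈ ZR := by
  unfold xiP
  split_ifs
  · exact Subring.mul_mem _ (mem_B _ _) (mem_Pneg _ _)
  · exact Subring.mul_mem _ (mem_B _ _) (mem_Ppos _ _)
  · exact Subring.zero_mem _

lemma mem_xiM (m : ℤ) (q : ℕ) (t : ℤ) : xiM m q t ∈ ZR := by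
  unfold xiM
  split_ifs
  · exact Subring.mul_mem _ (mem_B _ _) (mem_Pneg _ _)
  · exact Subring.mul_mem _ (mem_B _ _) (mem_Ppos _ _)
  · exact Subring.zero_mem _

/-- GKM property on the window [-m, m] -/
def GKMp (m : ℤ) (f : ℤ → Rpoly) : Prop :=
  ∀ t t' c : ℤ, -m ≤ t → t ≤ m → -m ≤ t' → t' ≤ m → t + t' = 2*c + 1 →
    (va - MvPolynomial.C (c:ℚ) * vd) ∣ (f t - f t')

lemma dvd_of_sg_eq (c : ℤ) (x y : Rpoly) (h : sg (c:ℚ) x = sg (c:ℚ) y) :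
    (va - MvPolynomial.C (c:ℚ) * vd) ∣ (x - y) := by
  have e : x - y = (x - sg (c:ℚ) x) - (y - sg (c:ℚ) y) := by rw [h]; ring
  rw [e]
  exact dvd_sub (dvd_sub_sg _ x) (dvd_sub_sg _ y)

lemma GKMp_xiP (m : ℤ) (q : ℕ) (hq : 1 ≤ q) : GKMp m (xiP m q) := by
  intro t t' c h1 h2 h3 h4 h5
  exact dvd_of_sg_eq c _ _ (sg_eq_xiP m q hq t t' c h1 h2 h3 h4 h5)

lemma GKMp_xiM (m : ℤ) (q : ℕ) (hq : 1 ≤ q) : GKMp m (xiM m q) := by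
  intro t t' c h1 h2 h3 h4 h5
  exact dvd_of_sg_eq c _ _ (sg_eq_xiM m q hq t t' c h1 h2 h3 h4 h5)

lemma GKMp_one (m : ℤ) : GKMp m (fun _ => 1) := by
  intro t t' c _ _ _ _ _
  simp

lemma GKMp_mul (m : ℤ) (f g : ℤ → Rpoly) (hf : GKMp m f) (hg : GKMp m g) :
    GKMp m (fun t => f t * g t) := by
  intro t t' c h1 h2 h3 h4 h5
  have e : f t * g t - f t' * g t' = f t * (g t - g t') + g t' * (f t - f t') := by ring
  rw [e]
  exact dvd_add (Dvd.dvd.mul_left (hg t t' c h1 h2 h3 h4 h5) _)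
    (Dvd.dvd.mul_left (hf t t' c h1 h2 h3 h4 h5) _)

lemma B_self (q : ℕ) : B ((q:ℤ) + (q:ℤ) - q) q = 1 := by
  unfold B
  rw [show (q:ℤ) + (q:ℤ) - (q:ℤ) = (q:ℤ) by ring]
  simp

lemma xiP_diag (m : ℤ) (q : ℕ) (hq : 1 ≤ q) (hqm : (q:ℤ) ≤ m) :
    xiP m q q = Pneg 0 ((0:ℤ) + q - 1) := by
  rw [xiP_r1 m q q 1 (Or.inl (by ring)) le_rfl hqm]
  have h1 : B ((1:ℤ) + q - 1) q = 1 := by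
    unfold B
    rw [show (1:ℤ) + q - 1 = (q:ℤ) by ring]
    simp
  rw [h1, map_one, one_mul, show (1:ℤ) - 1 = (0:ℤ) by ring]

lemma xiM_diag (m : ℤ) (q : ℕ) (hq : 1 ≤ q) (hqm : (q:ℤ) ≤ m) :
    xiM m q (-(q:ℤ)) = Ppos 1 ((1:ℤ) + q - 1) := by
  rw [xiM_r2 m q (-(q:ℤ)) 1 (Or.inl (by ring)) (by omega) le_rfl]
  have h1 : B ((1:ℤ) + q - 1) q = 1 := by
    unfold B
    rw [show (1:ℤ) + q - 1 = (q:ℤ) by ring]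
    simp
  rw [h1, map_one, one_mul]

lemma neg_prod (a : ℤ) (q : ℕ) :
    Pneg a (a + q - 1)
      = (-1:Rpoly)^q * ∏ k ∈ Finset.Icc a (a + q - 1), (va - MvPolynomial.C (k:ℚ) * vd) := by
  unfold Pneg
  rw [prod_Icc_eq_range, prod_Icc_eq_range,
    show ((-1:Rpoly))^q = ∏ _i ∈ Finset.range q, (-1:Rpoly) by
      rw [Finset.prod_const, Finset.card_range],
    ← Finset.prod_mul_distrib]
  exact Finset.prod_congr rfl (fun i _ => by ring)

lemma pos_prod (q : ℕ) :
    Ppos 1 ((1:ℤ) + q - 1)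
      = ∏ k ∈ Finset.Icc (1:ℤ) ((1:ℤ) + q - 1), (va - MvPolynomial.C ((-k : ℤ):ℚ) * vd) := by
  unfold Ppos
  rw [prod_Icc_eq_range, prod_Icc_eq_range]
  refine Finset.prod_congr rfl (fun i _ => ?_)
  rw [show ((-(1 + (i:ℤ)) : ℤ) : ℚ) = -(((1 + (i:ℤ) : ℤ)) : ℚ) by push_cast; ring, map_neg]
  ring

/-- the family indexed by 0..2m -/
def Xi (m : ℤ) (j : ℕ) : ℤ → Rpoly :=
  if j = 0 then (fun _ => 1) else if j % 2 = 1 then xiP m ((j+1)/2) else xiM m (j/2)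

def nIdx (t : ℤ) : ℤ := max (2*t - 1) (-2*t)

lemma mem_neg_one_pow (q : ℕ) : ((-1 : Rpoly))^q ∈ ZR :=
  Subring.pow_mem _ (Subring.neg_mem _ (Subring.one_mem _)) q

lemma sum_split (M : ℕ) (F : ℕ → Rpoly) :
    ∑ i ∈ Finset.range (2*M+1), F i
      = F 0 + ∑ q ∈ Finset.Icc 1 M, (F (2*q-1) + F (2*q)) := by
  induction M with
  | zero => simp
  | succ n ih =>
      rw [show 2*(n+1)+1 = (2*n+1) + 1 + 1 by ring, Finset.sum_range_succ, Finset.sum_range_succ,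
        ih, Finset.sum_Icc_succ_top (by omega : 1 ≤ n + 1)]
      rw [show 2*(n+1)-1 = 2*n+1 by omega, show 2*(n+1) = 2*n+1+1 by omega]
      ring

lemma sum_update_helper (m : ℕ) (h : ℕ → Rpoly) (j : ℕ) (b : Rpoly) (G : ℕ → Rpoly)
    (hjr : j ∈ Finset.range (2*m+1)) (hzj : h j = 0) :
    ∑ i ∈ Finset.range (2*m+1), Function.update h j b i * G i
      = b * G j + ∑ i ∈ Finset.range (2*m+1), h i * G i := by
  rw [Finset.sum_eq_sum_sdiff_singleton_add hjr (fun i => Function.update h j b i * G i),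
    Finset.sum_eq_sum_sdiff_singleton_add hjr (fun i => h i * G i), Function.update_self, hzj]
  have e1 : ∑ i ∈ Finset.range (2*m+1) \ {j}, Function.update h j b i * G i
      = ∑ i ∈ Finset.range (2*m+1) \ {j}, h i * G i := by
    refine Finset.sum_congr rfl (fun i hi => ?_)
    rw [Finset.mem_sdiff, Finset.mem_singleton] at hi
    rw [Function.update_of_ne hi.2]
  rw [e1]
  ring

lemma main_ind (m : ℕ) : ∀ k : ℕ, k ≤ 2*m+1 → ∀ f : ℤ → Rpoly,
    (∀ t : ℤ, -(m:ℤ) ≤ t → t ≤ m → f t ∈ ZR) →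
    GKMp (m:ℤ) f →
    (∀ t : ℤ, -(m:ℤ) ≤ t → t ≤ m → nIdx t < ((2*m+1-k : ℕ) : ℤ) → f t = 0) →
    ∃ h : ℕ → Rpoly, (∀ i, h i ∈ ZR) ∧ (∀ i : ℕ, i < 2*m+1-k → h i = 0) ∧
      ∀ t : ℤ, -(m:ℤ) ≤ t → t ≤ m → f t = ∑ i ∈ Finset.range (2*m+1), h i * Xi (m:ℤ) i t := by
  intro k
  induction k with
  | zero =>
      intro _ f _ _ hvan
      refine ⟨fun _ => 0, fun i => Subring.zero_mem _, fun i _ => rfl, fun t h1 h2 => ?_⟩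
      rw [hvan t h1 h2 (by unfold nIdx; omega)]
      simp
  | succ k ih =>
      intro hk f hmem hgkm hvan
      set j : ℕ := 2*m - k with hj
      rcases (show j = 0 ∨ (j % 2 = 1) ∨ (j ≠ 0 ∧ j % 2 = 0) from by omega) with hj0 | hjodd | ⟨hjne, hjev⟩
      · -- j = 0 : subtract f 0 * 1
        set f' : ℤ → Rpoly := fun t => f t - f 0 with hf'
        obtain ⟨h, hmemh, hzero, hsum⟩ := ih (by omega) f'
          (fun t h1 h2 => Subring.sub_mem _ (hmem t h1 h2) (hmem 0 (by omega) (by omega)))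
          (by
            intro t t' c h1 h2 h3 h4 h5
            have e : f' t - f' t' = f t - f t' := by simp [hf']
            rw [e]
            exact hgkm t t' c h1 h2 h3 h4 h5)
          (by
            intro t h1 h2 h3
            have ht0 : t = 0 := by unfold nIdx at h3; omega
            simp [hf', ht0])
        refine ⟨Function.update h 0 (f 0), ?_, ?_, ?_⟩
        · intro i
          rcases eq_or_ne i 0 with rfl | hne
          · rw [Function.update_self]; exact hmem 0 (by omega) (by omega)
          · rw [Function.update_of_ne hne]; exact hmemh i
        · intro i hi
          omega
        · intro t h1 h2
          rw [sum_update_helper m h 0 (f 0) _ (by simp) (hzero 0 (by omega))]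
          have hXi0 : Xi (m:ℤ) 0 t = 1 := by unfold Xi; simp
          have hs := hsum t h1 h2
          simp only [hf'] at hs
          rw [hXi0, ← hs]
          ring
      · -- j odd : subtract at vertex q, class xiP
        set q : ℕ := (j+1)/2 with hq
        have hq1 : 1 ≤ q := by omega
        have hqm : (q:ℤ) ≤ (m:ℤ) := by
          have hle : q ≤ m := by omega
          exact_mod_cast hle
        have hjq : j = 2*q - 1 := by omega
        have hdvdP : (∏ k' ∈ Finset.Icc (0:ℤ) ((0:ℤ) + q - 1),
            (va - MvPolynomial.C (k':ℚ) * vd)) ∣ f (q:ℤ) := by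
          apply prod_lin_dvd _ (fun x => x) (fun _ _ _ _ hxy => hxy)
          intro k' hk'
          rw [Finset.mem_Icc] at hk'
          have hgq := hgkm (q:ℤ) (2*k' + 1 - q) k' (by omega) (by omega) (by omega) (by omega)
            (by ring)
          have hz : f (2*k' + 1 - q) = 0 := by
            apply hvan _ (by omega) (by omega)
            unfold nIdx
            omega
          rw [hz, sub_zero] at hgq
          exact hgq
        obtain ⟨h0, hh0mem, hh0⟩ := gauss _ (fun x => x) (f (q:ℤ))
          (hmem (q:ℤ) (by omega) (by omega)) hdvdP
        set hj' : Rpoly := (-1:Rpoly)^q * h0 with hhj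
        have hsq : ((-1:Rpoly))^q * ((-1:Rpoly))^q = 1 := by
          rw [← pow_add]
          exact Even.neg_one_pow ⟨q, by ring⟩
        have hdiag : f (q:ℤ) = hj' * xiP (m:ℤ) q (q:ℤ) := by
          rw [xiP_diag (m:ℤ) q hq1 hqm, hh0, neg_prod, hhj,
            show ((-1:Rpoly)^q * h0) * ((-1:Rpoly)^q * ∏ k' ∈ Finset.Icc (0:ℤ) ((0:ℤ) + q - 1),
              (va - MvPolynomial.C (k':ℚ) * vd))
              = ((-1:Rpoly)^q * (-1:Rpoly)^q) * ((∏ k' ∈ Finset.Icc (0:ℤ) ((0:ℤ) + q - 1),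
              (va - MvPolynomial.C (k':ℚ) * vd)) * h0) from by ring, hsq, one_mul]
        set f' : ℤ → Rpoly := fun t => f t - hj' * xiP (m:ℤ) q t with hf'
        have hjmem : hj' ∈ ZR := Subring.mul_mem _ (mem_neg_one_pow q) hh0mem
        obtain ⟨h, hmemh, hzero, hsum⟩ := ih (by omega) f'
          (fun t h1 h2 => Subring.sub_mem _ (hmem t h1 h2)
            (Subring.mul_mem _ hjmem (mem_xiP _ _ _)))
          (by
            intro t t' c h1 h2 h3 h4 h5
            have e : f' t - f' t' = (f t - f t') - hj' * (xiP (m:ℤ) q t - xiP (m:ℤ) q t') := by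
              simp only [hf']; ring
            rw [e]
            exact dvd_sub (hgkm t t' c h1 h2 h3 h4 h5)
              (Dvd.dvd.mul_left (GKMp_xiP (m:ℤ) q hq1 t t' c h1 h2 h3 h4 h5) _))
          (by
            intro t h1 h2 h3
            simp only [hf']
            rcases (show nIdx t < ((2*m+1-(k+1) : ℕ):ℤ) ∨ t = (q:ℤ) from by
                unfold nIdx at h3 ⊢; omega) with hlt | rfl
            · have hz1 : f t = 0 := hvan t h1 h2 hlt
              have hz2 : xiP (m:ℤ) q t = 0 := by
                apply xiP_gap
                · unfold nIdx at hlt; omega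
                · unfold nIdx at hlt; omega
              rw [hz1, hz2]; ring
            · rw [← hdiag]; ring)
        refine ⟨Function.update h j hj', ?_, ?_, ?_⟩
        · intro i
          rcases eq_or_ne i j with rfl | hne
          · rw [Function.update_self]; exact hjmem
          · rw [Function.update_of_ne hne]; exact hmemh i
        · intro i hi
          rw [Function.update_of_ne (by omega)]
          exact hzero i (by omega)
        · intro t h1 h2
          rw [sum_update_helper m h j hj' _ (by rw [Finset.mem_range]; omega)
            (hzero j (by omega))]
          have hXij : Xi (m:ℤ) j t = xiP (m:ℤ) q t := by
            unfold Xi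
            rw [if_neg (by omega), if_pos (by omega)]
          have hs := hsum t h1 h2
          simp only [hf'] at hs
          rw [hXij, ← hs]
          ring
      · -- j even, j ≥ 2 : subtract at vertex -q, class xiM
        set q : ℕ := j/2 with hq
        have hq1 : 1 ≤ q := by omega
        have hqm : (q:ℤ) ≤ (m:ℤ) := by
          have hle : q ≤ m := by omega
          exact_mod_cast hle
        have hjq : j = 2*q := by omega
        have hdvdP : (∏ k' ∈ Finset.Icc (1:ℤ) ((1:ℤ) + q - 1),
            (va - MvPolynomial.C ((-k' : ℤ):ℚ) * vd)) ∣ f (-(q:ℤ)) := by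
          apply prod_lin_dvd _ (fun x => -x) (fun _ _ _ _ hxy => neg_inj.mp hxy)
          intro k' hk'
          rw [Finset.mem_Icc] at hk'
          have hgq := hgkm (-(q:ℤ)) ((q:ℤ) + 1 - 2*k') (-k') (by omega) (by omega) (by omega)
            (by omega) (by ring)
          have hz : f ((q:ℤ) + 1 - 2*k') = 0 := by
            apply hvan _ (by omega) (by omega)
            unfold nIdx
            omega
          rw [hz, sub_zero] at hgq
          exact hgq
        obtain ⟨h0, hh0mem, hh0⟩ := gauss _ (fun x => -x) (f (-(q:ℤ)))
          (hmem (-(q:ℤ)) (by omega) (by omega)) hdvdP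
        have hdiag : f (-(q:ℤ)) = h0 * xiM (m:ℤ) q (-(q:ℤ)) := by
          rw [xiM_diag (m:ℤ) q hq1 hqm, hh0, pos_prod]
          ring
        set f' : ℤ → Rpoly := fun t => f t - h0 * xiM (m:ℤ) q t with hf'
        obtain ⟨h, hmemh, hzero, hsum⟩ := ih (by omega) f'
          (fun t h1 h2 => Subring.sub_mem _ (hmem t h1 h2)
            (Subring.mul_mem _ hh0mem (mem_xiM _ _ _)))
          (by
            intro t t' c h1 h2 h3 h4 h5
            have e : f' t - f' t' = (f t - f t') - h0 * (xiM (m:ℤ) q t - xiM (m:ℤ) q t') := by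
              simp only [hf']; ring
            rw [e]
            exact dvd_sub (hgkm t t' c h1 h2 h3 h4 h5)
              (Dvd.dvd.mul_left (GKMp_xiM (m:ℤ) q hq1 t t' c h1 h2 h3 h4 h5) _))
          (by
            intro t h1 h2 h3
            simp only [hf']
            rcases (show nIdx t < ((2*m+1-(k+1) : ℕ):ℤ) ∨ t = -(q:ℤ) from by
                unfold nIdx at h3 ⊢; omega) with hlt | rfl
            · have hz1 : f t = 0 := hvan t h1 h2 hlt
              have hz2 : xiM (m:ℤ) q t = 0 := by
                apply xiM_gap
                · unfold nIdx at hlt; omega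
                · unfold nIdx at hlt; omega
              rw [hz1, hz2]; ring
            · rw [← hdiag]; ring)
        refine ⟨Function.update h j h0, ?_, ?_, ?_⟩
        · intro i
          rcases eq_or_ne i j with rfl | hne
          · rw [Function.update_self]; exact hh0mem
          · rw [Function.update_of_ne hne]; exact hmemh i
        · intro i hi
          rw [Function.update_of_ne (by omega)]
          exact hzero i (by omega)
        · intro t h1 h2
          rw [sum_update_helper m h j h0 _ (by rw [Finset.mem_range]; omega)
            (hzero j (by omega))]
          have hXij : Xi (m:ℤ) j t = xiM (m:ℤ) q t := by
            unfold Xi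
            rw [if_neg (by omega), if_neg (by omega)]
          have hs := hsum t h1 h2
          simp only [hf'] at hs
          rw [hXij, ← hs]
          ring


/-- the structure constants of the Knutson–Tao basis lie in `ℤ[α,δ]`. -/
theorem statement19 (m : ℕ) (hm : 1 ≤ m) (fa fb : ℤ → Rpoly)
    (ha : fa = (fun _ => 1) ∨ (∃ q : ℕ, 1 ≤ q ∧ q ≤ m ∧ fa = xiP m q) ∨
      (∃ q : ℕ, 1 ≤ q ∧ q ≤ m ∧ fa = xiM m q))
    (hb : fb = (fun _ => 1) ∨ (∃ q : ℕ, 1 ≤ q ∧ q ≤ m ∧ fb = xiP m q) ∨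
      (∃ q : ℕ, 1 ≤ q ∧ q ≤ m ∧ fb = xiM m q)) :
    ∃ (h0 : Rpoly) (h1 h2 : ℕ → Rpoly),
      h0 ∈ (MvPolynomial.map (σ := Fin 2) (Int.castRingHom ℚ)).range ∧
      (∀ q : ℕ, 1 ≤ q → q ≤ m →
        h1 q ∈ (MvPolynomial.map (σ := Fin 2) (Int.castRingHom ℚ)).range ∧
        h2 q ∈ (MvPolynomial.map (σ := Fin 2) (Int.castRingHom ℚ)).range) ∧
      ∀ t : ℤ, -(m : ℤ) ≤ t → t ≤ (m : ℤ) →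
        fa t * fb t = h0 + ∑ q ∈ Finset.Icc 1 m, (h1 q * xiP m q t + h2 q * xiM m q t) := by

  have hmemfa : ∀ t : ℤ, fa t ∈ ZR := by
    rcases ha with rfl | ⟨q, hq1, hqm, rfl⟩ | ⟨q, hq1, hqm, rfl⟩
    · exact fun t => Subring.one_mem _
    · exact fun t => mem_xiP _ _ _
    · exact fun t => mem_xiM _ _ _
  have hmemfb : ∀ t : ℤ, fb t ∈ ZR := by
    rcases hb with rfl | ⟨q, hq1, hqm, rfl⟩ | ⟨q, hq1, hqm, rfl⟩
    · exact fun t => Subring.one_mem _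
    · exact fun t => mem_xiP _ _ _
    · exact fun t => mem_xiM _ _ _
  have hgkma : GKMp (m:ℤ) fa := by
    rcases ha with rfl | ⟨q, hq1, hqm, rfl⟩ | ⟨q, hq1, hqm, rfl⟩
    · exact GKMp_one _
    · exact GKMp_xiP _ _ hq1
    · exact GKMp_xiM _ _ hq1
  have hgkmb : GKMp (m:ℤ) fb := by
    rcases hb with rfl | ⟨q, hq1, hqm, rfl⟩ | ⟨q, hq1, hqm, rfl⟩
    · exact GKMp_one _
    · exact GKMp_xiP _ _ hq1
    · exact GKMp_xiM _ _ hq1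
  obtain ⟨h, hmemh, _, hsum⟩ := main_ind m (2*m+1) le_rfl (fun t => fa t * fb t)
    (fun t _ _ => Subring.mul_mem _ (hmemfa t) (hmemfb t))
    (GKMp_mul _ _ _ hgkma hgkmb)
    (fun t h1 h2 h3 => absurd h3 (by unfold nIdx; omega))
  refine ⟨h 0, fun q => h (2*q-1), fun q => h (2*q), hmemh 0,
    fun q _ _ => ⟨hmemh _, hmemh _⟩, ?_⟩
  intro t h1 h2
  rw [hsum t h1 h2, sum_split m (fun i => h i * Xi (m:ℤ) i t)]
  have hXi0 : Xi (m:ℤ) 0 t = 1 := by unfold Xi; simp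
  rw [hXi0, mul_one]
  congr 1
  apply Finset.sum_congr rfl
  intro q hq
  rw [Finset.mem_Icc] at hq
  have hXiodd : Xi (m:ℤ) (2*q-1) t = xiP (m:ℤ) q t := by
    unfold Xi
    rw [if_neg (by omega), if_pos (by omega), show (2*q-1+1)/2 = q from by omega]
  have hXiev : Xi (m:ℤ) (2*q) t = xiM (m:ℤ) q t := by
    unfold Xi
    rw [if_neg (by omega), if_neg (by omega), show (2*q)/2 = q from by omega]
  rw [hXiodd, hXiev]
end
end
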